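/- arXiv:2105.05569 — 8 statements merged into one kernel-verified Lean document; each statement's English description precedes it below -/
import Mathlib

section
/- If L is a uniformly convex real Banach space, then its unit sphere has the uniform separation property: for every ε ∈ (0,2] there exists ϖ(ε) > 0 such that for every x in the unit sphere S_L there exists a continuous linear functional p in the dual unit sphere with ⟨p, x⟩ - ϖ(ε) ≥ ⟨p, y⟩ for all y ∈ S_L with ‖x - y‖ ≥ ε. -/
open Metric Set Filter

/-- If `L` is a uniformly convex real Banach space (expressed via positivity of the
modulus of convexity `δ`), then its unit sphere has the uniform separation property. -/
theorem sphere_uniform_separation_property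
    {L : Type*} [NormedAddCommGroup L] [NormedSpace ℝ L] [CompleteSpace L]
    (δ : ℝ → ℝ)
    (hδdef : ∀ ε : ℝ, δ ε = sInf ((fun xy : L × L => 1 - ‖(2⁻¹ : ℝ) • (xy.1 + xy.2)‖) ''
      {xy : L × L | ‖xy.1‖ = 1 ∧ ‖xy.2‖ = 1 ∧ ε ≤ ‖xy.1 - xy.2‖}))
    (hconv : ∀ ε ∈ Set.Ioc (0 : ℝ) 2, 0 < δ ε) :
    ∀ ε ∈ Set.Ioc (0 : ℝ) 2, ∃ ϖ > (0 : ℝ), ∀ x : L, ‖x‖ = 1 →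
      ∃ p : StrongDual ℝ L, ‖p‖ = 1 ∧
        ∀ y : L, ‖y‖ = 1 → ε ≤ ‖x - y‖ → p y ≤ p x - ϖ := by
  intro ε hε
  have hδpos := hconv ε hε
  refine ⟨δ ε, hδpos, ?_⟩
  intro x hx
  have hx0 : x ≠ 0 := by
    intro h; rw [h, norm_zero] at hx; norm_num at hx
  obtain ⟨p, hp1, hpx⟩ := exists_dual_vector ℝ x (norm_ne_zero_iff.mpr hx0)
  refine ⟨p, hp1, ?_⟩
  intro y hy hxy
  have hbdd : BddBelow ((fun xy : L × L => 1 - ‖(2⁻¹ : ℝ) • (xy.1 + xy.2)‖) ''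
      {xy : L × L | ‖xy.1‖ = 1 ∧ ‖xy.2‖ = 1 ∧ ε ≤ ‖xy.1 - xy.2‖}) := by
    refine ⟨0, ?_⟩
    rintro z ⟨⟨a, b⟩, ⟨ha, hb, -⟩, rfl⟩
    have : ‖(2⁻¹ : ℝ) • (a + b)‖ ≤ 1 := by
      calc ‖(2⁻¹ : ℝ) • (a + b)‖ ≤ |(2⁻¹ : ℝ)| * (‖a‖ + ‖b‖) := by
            rw [norm_smul, Real.norm_eq_abs]
            exact mul_le_mul_of_nonneg_left (norm_add_le _ _) (abs_nonneg _)
        _ = 1 := by rw [ha, hb, abs_of_pos (by norm_num : (0:ℝ) < 2⁻¹)]; norm_num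
    simpa using this
  have h1 : δ ε ≤ 1 - ‖(2⁻¹ : ℝ) • (x + y)‖ := by
    rw [hδdef]
    exact csInf_le hbdd ⟨(x, y), ⟨hx, hy, hxy⟩, rfl⟩
  have h2 : p x + p y = 2 * p ((2⁻¹ : ℝ) • (x + y)) := by
    rw [map_smul, map_add, smul_eq_mul]; ring
  have h3 : p ((2⁻¹ : ℝ) • (x + y)) ≤ ‖(2⁻¹ : ℝ) • (x + y)‖ := by
    calc p ((2⁻¹ : ℝ) • (x + y)) ≤ ‖p ((2⁻¹ : ℝ) • (x + y))‖ := le_abs_self _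
      _ ≤ ‖p‖ * ‖(2⁻¹ : ℝ) • (x + y)‖ := p.le_opNorm _
      _ = ‖(2⁻¹ : ℝ) • (x + y)‖ := by rw [hp1, one_mul]
  have hpx' : p x = 1 := by rw [hpx, hx]; norm_num
  linarith
end

section
/- Let X be a Banach space and C a norm-bounded subset of X*. Suppose (C, γ) is a complete pseudometric space having the w*-uniform separation property in X*. Let f : C → ℝ ∪ {+∞} be any proper function bounded from below. Then for each n ≥ 1, the set O_n := {x ∈ X : ∃ p_n ∈ C with f(p_n) + ⟨p_n, x⟩ < inf{f(p) + ⟨p, x⟩ : p ∈ C, γ(p, p_n) ≥ 1/n}} is the complement of a porous set in X. -/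
open Metric Set Filter

/-- A set `A` is porous in the metric space `X`. -/
def Porous {X : Type*} [MetricSpace X] (A : Set X) : Prop :=
  ∃ l : ℝ, l ∈ Set.Ioc (0 : ℝ) 1 ∧ ∃ r₀ > (0 : ℝ), ∀ x : X, ∀ r ∈ Set.Ioc (0 : ℝ) r₀,
    ∃ y : X, Metric.ball y (l * r) ⊆ Metric.ball x r ∩ Aᶜ

/-- under the w*-USP hypothesis on the complete pseudometric space `(C,γ)`, each set
`Oₙ` (the set of `x ∈ X` for which there is `pₙ ∈ C` with
`f(pₙ) + ⟨pₙ,x⟩ < inf{f(p)+⟨p,x⟩ : p ∈ C, γ(p,pₙ) ≥ 1/n}`) is the complement of a porous set. -/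
theorem On_complement_of_porous
    {X : Type*} [NormedAddCommGroup X] [NormedSpace ℝ X] [CompleteSpace X]
    (C : Set (StrongDual ℝ X))
    (γ : StrongDual ℝ X → StrongDual ℝ X → ℝ)
    (hbdd : ∃ D : ℝ, ∀ p ∈ C, ‖p‖ ≤ D)
    (hγ0 : ∀ p ∈ C, γ p p = 0)
    (hγsymm : ∀ p ∈ C, ∀ q ∈ C, γ p q = γ q p)
    (hγtri : ∀ p ∈ C, ∀ q ∈ C, ∀ r ∈ C, γ p q ≤ γ p r + γ r q)
    (hcomplete : ∀ u : ℕ → StrongDual ℝ X, (∀ n, u n ∈ C) →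
      (∀ ε > (0 : ℝ), ∃ N : ℕ, ∀ m ≥ N, ∀ n ≥ N, γ (u m) (u n) < ε) →
      ∃ l ∈ C, Tendsto (fun n => γ (u n) l) atTop (nhds 0))
    (hUSP : ∃ a > (0 : ℝ), ∀ ε ∈ Set.Ioc (0 : ℝ) a, ∃ ϖ > (0 : ℝ), ∀ p ∈ C,
      ∃ x : X, ‖x‖ ≤ 1 ∧ ∀ q ∈ C, ε ≤ γ q p → q x ≤ p x - ϖ)
    (f : StrongDual ℝ X → EReal)
    (hproper : ∃ p ∈ C, f p ≠ ⊤)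
    (hbelow : ∃ m : ℝ, ∀ p ∈ C, (m : EReal) ≤ f p)
    (n : ℕ) (hn : 1 ≤ n) :
    Porous ({x : X | ∃ pn ∈ C, f pn + ((pn x : ℝ) : EReal) <
      sInf ((fun p => f p + ((p x : ℝ) : EReal)) ''
        {p | p ∈ C ∧ (1 : ℝ) / n ≤ γ p pn})}ᶜ) := by
  classical
  obtain ⟨D₀, hD₀⟩ := hbdd
  obtain ⟨a, ha, hU⟩ := hUSP
  obtain ⟨m, hm⟩ := hbelow
  obtain ⟨p₀, hp₀C, hp₀top⟩ := hproper
  set D : ℝ := max D₀ 1 with hDdef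
  have hD1 : (1 : ℝ) ≤ D := le_max_right _ _
  have hDpos : (0 : ℝ) < D := lt_of_lt_of_le one_pos hD1
  have hnorm : ∀ p ∈ C, ‖p‖ ≤ D := fun p hp => le_trans (hD₀ p hp) (le_max_left _ _)
  have hnR : (0 : ℝ) < (n : ℝ) := by exact_mod_cast hn
  have hninv : (0 : ℝ) < 1 / (n : ℝ) := one_div_pos.mpr hnR
  obtain ⟨ϖ, hϖ, hsep⟩ := hU (min (1 / (n : ℝ)) a) ⟨lt_min hninv ha, min_le_right _ _⟩
  set l : ℝ := min (1 / 2) (ϖ / (8 * D)) with hldef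
  have hl0 : 0 < l := lt_min (by norm_num) (by positivity)
  have hl1 : l ≤ 1 := le_trans (min_le_left _ _) (by norm_num)
  have hlhalf : l ≤ 1 / 2 := min_le_left _ _
  have h8 : l * (8 * D) ≤ ϖ := (le_div_iff₀ (by positivity)).mp (min_le_right _ _)
  refine ⟨l, ⟨hl0, hl1⟩, 1, one_pos, ?_⟩
  intro x r hr
  obtain ⟨hr0, hr1⟩ := hr
  set b : EReal := sInf ((fun p => f p + ((p x : ℝ) : EReal)) '' C) with hbdef
  -- lower bound for b
  have hblow : ((m - D * ‖x‖ : ℝ) : EReal) ≤ b := by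
    refine le_sInf ?_
    rintro t ⟨p, hpC, rfl⟩
    have hpx : -(D * ‖x‖) ≤ p x := by
      have h3 : ‖p x‖ ≤ ‖p‖ * ‖x‖ := p.le_opNorm x
      have h4 : ‖p‖ * ‖x‖ ≤ D * ‖x‖ :=
        mul_le_mul_of_nonneg_right (hnorm p hpC) (norm_nonneg x)
      have h5 : |p x| ≤ D * ‖x‖ := by rw [← Real.norm_eq_abs]; linarith
      linarith [neg_abs_le (p x)]
    calc ((m - D * ‖x‖ : ℝ) : EReal) ≤ ((m + p x : ℝ) : EReal) := by
          exact_mod_cast (by linarith : m - D * ‖x‖ ≤ m + p x)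
      _ = (m : EReal) + ((p x : ℝ) : EReal) := EReal.coe_add _ _
      _ ≤ f p + ((p x : ℝ) : EReal) := add_le_add_left (hm p hpC) _
  have hbbot : (⊥ : EReal) < b := lt_of_lt_of_le (EReal.bot_lt_coe _) hblow
  -- upper bound for b
  have hp₀bot : f p₀ ≠ ⊥ := by
    intro h
    have := hm p₀ hp₀C
    rw [h, le_bot_iff] at this
    exact EReal.coe_ne_bot m this
  set c₀ : ℝ := (f p₀).toReal with hc₀def
  have hc₀ : f p₀ = (c₀ : EReal) := (EReal.coe_toReal hp₀top hp₀bot).symm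
  have hbtop : b < ⊤ := by
    have h1 : b ≤ f p₀ + ((p₀ x : ℝ) : EReal) := sInf_le ⟨p₀, hp₀C, rfl⟩
    rw [hc₀, ← EReal.coe_add] at h1
    exact lt_of_le_of_lt h1 (EReal.coe_lt_top _)
  set b₀ : ℝ := b.toReal with hb₀def
  have hb : b = (b₀ : EReal) := (EReal.coe_toReal hbtop.ne hbbot.ne').symm
  have hδ : (0 : ℝ) < r * ϖ / 8 := by positivity
  have hlt : b < ((b₀ + r * ϖ / 8 : ℝ) : EReal) := by
    rw [hb]; exact_mod_cast (by linarith : b₀ < b₀ + r * ϖ / 8)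
  obtain ⟨t, ht, htlt⟩ := sInf_lt_iff.mp hlt
  obtain ⟨pn, hpnC, rfl⟩ := ht
  have hfpn_bot : f pn ≠ ⊥ := by
    intro h
    have := hm pn hpnC
    rw [h, le_bot_iff] at this
    exact EReal.coe_ne_bot m this
  have htlt2 : f pn + ((pn x : ℝ) : EReal) < ((b₀ + r * ϖ / 8 : ℝ) : EReal) := htlt
  have hfpn_top : f pn ≠ ⊤ := by
    intro h
    rw [h, EReal.top_add_coe] at htlt2
    exact not_top_lt htlt2
  set c : ℝ := (f pn).toReal with hcdef
  have hc : f pn = (c : EReal) := (EReal.coe_toReal hfpn_top hfpn_bot).symm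
  have hcx : c + pn x < b₀ + r * ϖ / 8 := by
    rw [hc, ← EReal.coe_add] at htlt2
    exact_mod_cast htlt2
  obtain ⟨u, hu, husep⟩ := hsep pn hpnC
  refine ⟨x - (r / 2) • u, ?_⟩
  intro z hz
  have hzy : ‖z - (x - (r / 2) • u)‖ < l * r := mem_ball_iff_norm.mp hz
  set w : X := z - (x - (r / 2) • u) with hwdef
  constructor
  · -- z ∈ ball x r
    rw [mem_ball_iff_norm]
    have hid : z - x = w - (r / 2) • u := by
      rw [hwdef]; module
    have h1 : ‖z - x‖ ≤ ‖w‖ + ‖(r / 2) • u‖ := by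
      rw [hid]; exact norm_sub_le _ _
    have h2 : ‖(r / 2) • u‖ ≤ r / 2 := by
      rw [norm_smul, Real.norm_eq_abs, abs_of_pos (by linarith)]
      nlinarith [norm_nonneg u]
    have h3 : l * r ≤ (1 / 2) * r := mul_le_mul_of_nonneg_right hlhalf hr0.le
    linarith
  · -- z ∈ Oₙ
    simp only [mem_compl_iff, mem_setOf_eq, not_not]
    refine ⟨pn, hpnC, ?_⟩
    have key : ∀ t ∈ ((fun p => f p + ((p z : ℝ) : EReal)) ''
        {p | p ∈ C ∧ (1 : ℝ) / n ≤ γ p pn}),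
        ((c + pn z + r * ϖ / 8 : ℝ) : EReal) ≤ t := by
      rintro t ⟨q, ⟨hqC, hqγ⟩, rfl⟩
      show ((c + pn z + r * ϖ / 8 : ℝ) : EReal) ≤ f q + ((q z : ℝ) : EReal)
      have hqsep : q u ≤ pn u - ϖ :=
        husep q hqC (le_trans (min_le_left _ _) hqγ)
      have hq_bot : f q ≠ ⊥ := by
        intro h
        have := hm q hqC
        rw [h, le_bot_iff] at this
        exact EReal.coe_ne_bot m this
      by_cases hq_top : f q = ⊤
      · rw [hq_top, EReal.top_add_coe]
        exact le_top
      · set d : ℝ := (f q).toReal with hddef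
        have hd : f q = (d : EReal) := (EReal.coe_toReal hq_top hq_bot).symm
        have hqx : b₀ ≤ d + q x := by
          have h1 : b ≤ f q + ((q x : ℝ) : EReal) := sInf_le ⟨q, hqC, rfl⟩
          rw [hb, hd, ← EReal.coe_add] at h1
          exact_mod_cast h1
        rw [hd, ← EReal.coe_add]
        rw [show ((c + pn z + r * ϖ / 8 : ℝ) : EReal) = (((c + pn z + r * ϖ / 8 : ℝ)) : EReal) from rfl]
        refine EReal.coe_le_coe_iff.mpr ?_
        -- expansions
        have hqw : q w = q z - q x + (r / 2) * q u := by
          rw [hwdef]; simp [map_sub, map_smul]; ring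
        have hpnw : pn w = pn z - pn x + (r / 2) * pn u := by
          rw [hwdef]; simp [map_sub, map_smul]; ring
        have hqwb : |q w| ≤ D * ‖w‖ := by
          have h3 : ‖q w‖ ≤ ‖q‖ * ‖w‖ := q.le_opNorm w
          have h4 : ‖q‖ * ‖w‖ ≤ D * ‖w‖ :=
            mul_le_mul_of_nonneg_right (hnorm q hqC) (norm_nonneg w)
          rw [Real.norm_eq_abs] at h3; linarith
        have hpnwb : |pn w| ≤ D * ‖w‖ := by
          have h3 : ‖pn w‖ ≤ ‖pn‖ * ‖w‖ := pn.le_opNorm w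
          have h4 : ‖pn‖ * ‖w‖ ≤ D * ‖w‖ :=
            mul_le_mul_of_nonneg_right (hnorm pn hpnC) (norm_nonneg w)
          rw [Real.norm_eq_abs] at h3; linarith
        have hwlr : D * ‖w‖ ≤ ϖ * r / 8 := by
          have h5 : D * ‖w‖ ≤ D * (l * r) :=
            mul_le_mul_of_nonneg_left hzy.le hDpos.le
          have h6 : l * (8 * D) * r ≤ ϖ * r :=
            mul_le_mul_of_nonneg_right h8 hr0.le
          nlinarith
        have h7 : (r / 2) * ϖ ≤ (r / 2) * (pn u - q u) :=
          mul_le_mul_of_nonneg_left (by linarith) (by linarith)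
        have habs1 := abs_le.mp hqwb
        have habs2 := abs_le.mp hpnwb
        -- q z = q x + q w - (r/2) q u ; pn z = pn x + pn w - (r/2) pn u
        linarith [hqx, hcx, h7, habs1.1, habs2.2, hwlr, hqw.le, hqw.ge, hpnw.le, hpnw.ge]
    have hfin : ((c + pn z : ℝ) : EReal) < ((c + pn z + r * ϖ / 8 : ℝ) : EReal) := by
      exact_mod_cast (by linarith : c + pn z < c + pn z + r * ϖ / 8)
    rw [hc, ← EReal.coe_add]
    exact lt_of_lt_of_le hfin (le_sInf key)
end

section
/- Let X be a Banach space and C a norm-bounded subset of X*. Suppose (C, γ) is a complete pseudometric space having the w*-uniform separation property in X*. Let f : C → ℝ ∪ {+∞} be any proper function bounded from below. Then there exists a σ-porous subset F of X such that for every x ∈ X \ F, the perturbed function p ↦ f(p) + ⟨p, x⟩ attains γ-strongly-directionally its infimum over C at some direction u ∈ C; i.e., every sequence (q_n) ⊆ C with f(q_n) + ⟨q_n, x⟩ → inf_C (f + x̂) satisfies γ(q_n, u) → 0. -/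
open Metric Set Filter

/-- A set is σ-porous if it is a countable union of porous sets. -/
def SigmaPorous {X : Type*} [MetricSpace X] (A : Set X) : Prop :=
  ∃ s : ℕ → Set X, (∀ n, Porous (s n)) ∧ A = ⋃ n, s n

/-- The "bad" set at scale `ε`: points `x` for which no sublevel set of `f + ⟨·, x⟩` has
γ-diameter at most `2ε`. -/
def lvpBad {X : Type*} [NormedAddCommGroup X] [NormedSpace ℝ X]
    (C : Set (StrongDual ℝ X)) (γ : StrongDual ℝ X → StrongDual ℝ X → ℝ)
    (f : StrongDual ℝ X → EReal) (ε : ℝ) : Set X :=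
  {x | ¬ ∃ δ : ℝ, 0 < δ ∧ ∀ p ∈ C, ∀ q ∈ C,
      f p + ((p x : ℝ) : EReal) < sInf ((fun p => f p + ((p x : ℝ) : EReal)) '' C) + (δ : EReal) →
      f q + ((q x : ℝ) : EReal) < sInf ((fun p => f p + ((p x : ℝ) : EReal)) '' C) + (δ : EReal) →
      γ p q ≤ 2 * ε}

private lemma lvp_finite {X : Type*} [NormedAddCommGroup X] [NormedSpace ℝ X]
    (C : Set (StrongDual ℝ X)) (f : StrongDual ℝ X → EReal)
    (D m : ℝ) (hD : ∀ p ∈ C, ‖p‖ ≤ D) (hD0 : 0 ≤ D)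
    (hm : ∀ p ∈ C, (m : EReal) ≤ f p)
    (p₀ : StrongDual ℝ X) (hp₀ : p₀ ∈ C) (hp₀top : f p₀ ≠ ⊤) (x : X) :
    ∃ ix : ℝ, sInf ((fun p => f p + ((p x : ℝ) : EReal)) '' C) = (ix : EReal) := by
  set I := sInf ((fun p => f p + ((p x : ℝ) : EReal)) '' C) with hI
  have hlb : ((m - D * ‖x‖ : ℝ) : EReal) ≤ I := by
    apply le_sInf
    rintro b ⟨p, hp, rfl⟩
    have h1 : -(D * ‖x‖) ≤ p x := by
      have h2 := p.le_opNorm x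
      have h3 : ‖p‖ * ‖x‖ ≤ D * ‖x‖ :=
        mul_le_mul_of_nonneg_right (hD p hp) (norm_nonneg x)
      have h4 : |p x| ≤ D * ‖x‖ := by
        rw [← Real.norm_eq_abs]; exact h2.trans h3
      linarith [neg_abs_le (p x)]
    calc ((m - D * ‖x‖ : ℝ) : EReal) = (m : EReal) + ((-(D * ‖x‖) : ℝ) : EReal) := by
          rw [← EReal.coe_add]; congr 1
      _ ≤ f p + ((p x : ℝ) : EReal) := add_le_add (hm p hp) (EReal.coe_le_coe_iff.mpr h1)
  have hub : I ≤ f p₀ + ((p₀ x : ℝ) : EReal) := sInf_le (Set.mem_image_of_mem _ hp₀)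
  have htop : I ≠ ⊤ := by
    have : f p₀ + ((p₀ x : ℝ) : EReal) < ⊤ := EReal.add_lt_top hp₀top (EReal.coe_ne_top _)
    exact (hub.trans_lt this).ne
  have hbot : I ≠ ⊥ := ((EReal.bot_lt_coe _).trans_le hlb).ne'
  exact ⟨I.toReal, (EReal.coe_toReal htop hbot).symm⟩

private lemma lvp_exists_min {X : Type*} [NormedAddCommGroup X] [NormedSpace ℝ X]
    (C : Set (StrongDual ℝ X)) (f : StrongDual ℝ X → EReal) (x : X)
    (hfin : ∃ ix : ℝ, sInf ((fun p => f p + ((p x : ℝ) : EReal)) '' C) = (ix : EReal))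
    (δ : ℝ) (hδ : 0 < δ) :
    ∃ p ∈ C, f p + ((p x : ℝ) : EReal) <
      sInf ((fun p => f p + ((p x : ℝ) : EReal)) '' C) + (δ : EReal) := by
  obtain ⟨ix, hix⟩ := hfin
  have hlt : sInf ((fun p => f p + ((p x : ℝ) : EReal)) '' C) <
      sInf ((fun p => f p + ((p x : ℝ) : EReal)) '' C) + (δ : EReal) := by
    rw [hix, ← EReal.coe_add]
    exact_mod_cast lt_add_of_pos_right ix hδ
  obtain ⟨b, hb, hblt⟩ := sInf_lt_iff.mp hlt
  obtain ⟨p, hp, rfl⟩ := hb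
  exact ⟨p, hp, hblt⟩

private lemma lvp_bad_porous {X : Type*} [NormedAddCommGroup X] [NormedSpace ℝ X]
    (C : Set (StrongDual ℝ X)) (γ : StrongDual ℝ X → StrongDual ℝ X → ℝ)
    (f : StrongDual ℝ X → EReal)
    (D : ℝ) (hD1 : 1 ≤ D) (hD : ∀ p ∈ C, ‖p‖ ≤ D)
    (hγsymm : ∀ p ∈ C, ∀ q ∈ C, γ p q = γ q p)
    (hγtri : ∀ p ∈ C, ∀ q ∈ C, ∀ r ∈ C, γ p q ≤ γ p r + γ r q)
    (hfin : ∀ x : X, ∃ ix : ℝ, sInf ((fun p => f p + ((p x : ℝ) : EReal)) '' C) = (ix : EReal))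
    (ε ϖ : ℝ) (hε : 0 < ε) (hϖ : 0 < ϖ)
    (husp : ∀ p ∈ C, ∃ v : X, ‖v‖ ≤ 1 ∧ ∀ q ∈ C, ε ≤ γ q p → q v ≤ p v - ϖ) :
    Porous (lvpBad C γ f ε) := by
  have hD0 : (0 : ℝ) < D := lt_of_lt_of_le one_pos hD1
  set l : ℝ := min (ϖ / (16 * D)) (1 / 2) with hl
  have hl0 : 0 < l := lt_min (by positivity) (by norm_num)
  have hl2 : l ≤ 1 / 2 := min_le_right _ _
  have hlϖ : l ≤ ϖ / (16 * D) := min_le_left _ _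
  refine ⟨l, ⟨hl0, by linarith⟩, 1, one_pos, fun x r hr => ?_⟩
  obtain ⟨hr0, hr1⟩ := hr
  -- near minimizer at x
  obtain ⟨p, hpC, hpmin⟩ := lvp_exists_min C f x (hfin x) (r * ϖ / 8) (by positivity)
  obtain ⟨v, hv1, hvsep⟩ := husp p hpC
  refine ⟨x - (r / 2) • v, fun z hz => ?_⟩
  rw [mem_ball, dist_eq_norm] at hz
  have hzy : ‖z - (x - (r / 2) • v)‖ ≤ l * r := hz.le
  constructor
  · -- z ∈ ball x r
    rw [mem_ball, dist_eq_norm]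
    have h1 : z - x = (z - (x - (r / 2) • v)) + (-(r / 2) • v) := by
      simp only [neg_smul]; abel
    have h2 : ‖(-(r / 2) • v : X)‖ ≤ r / 2 := by
      rw [norm_smul, Real.norm_eq_abs, abs_neg, abs_of_pos (by linarith : (0:ℝ) < r / 2)]
      nlinarith [norm_nonneg v]
    calc ‖z - x‖ ≤ ‖z - (x - (r / 2) • v)‖ + ‖(-(r / 2) • v : X)‖ := by
          rw [h1]; exact norm_add_le _ _
      _ < l * r + r / 2 := by linarith [hz]
      _ ≤ r := by nlinarith
  · -- z ∉ lvpBad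
    simp only [mem_compl_iff, lvpBad, mem_setOf_eq, not_not]
    obtain ⟨ix, hix⟩ := hfin x
    have hsplit : ∀ g : StrongDual ℝ X, f g + ((g z : ℝ) : EReal) =
        (f g + ((g x : ℝ) : EReal)) + ((g (z - x) : ℝ) : EReal) := by
      intro g
      have h : (g z : ℝ) = g x + g (z - x) := by
        have := map_sub g z x; linarith
      rw [h, EReal.coe_add, add_assoc]
    -- key claim: any δ'-minimizer at z is γ-close to p
    have key : ∀ q ∈ C, f q + ((q z : ℝ) : EReal) <
        sInf ((fun p => f p + ((p z : ℝ) : EReal)) '' C) + ((r * ϖ / 8 : ℝ) : EReal) →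
        γ q p < ε := by
      intro q hqC hqlt
      by_contra hcon
      push_neg at hcon
      have hqv : q v ≤ p v - ϖ := hvsep q hqC hcon
      -- real bounds on g (z - x)
      have hzxeq : z - x = (z - (x - (r / 2) • v)) - (r / 2) • v := by abel
      have hqbound : -(D * (l * r)) - (r / 2) * (p v - ϖ) ≤ q (z - x) := by
        have h1 : q (z - x) = q (z - (x - (r / 2) • v)) - (r / 2) * q v := by
          rw [hzxeq, map_sub, map_smul]; simp [smul_eq_mul]
        have h2 : |q (z - (x - (r / 2) • v))| ≤ D * (l * r) := by
          rw [← Real.norm_eq_abs]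
          calc ‖q (z - (x - (r / 2) • v))‖ ≤ ‖q‖ * ‖z - (x - (r / 2) • v)‖ := q.le_opNorm _
            _ ≤ D * (l * r) := mul_le_mul (hD q hqC) hzy (norm_nonneg _) hD0.le
        have h3 : -(r / 2) * (p v - ϖ) ≤ -(r / 2) * q v := by nlinarith
        have h4 := (abs_le.mp h2).1
        linarith
      have hpbound : p (z - x) ≤ D * (l * r) - (r / 2) * (p v) := by
        have h1 : p (z - x) = p (z - (x - (r / 2) • v)) - (r / 2) * p v := by
          rw [hzxeq, map_sub, map_smul]; simp [smul_eq_mul]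
        have h2 : |p (z - (x - (r / 2) • v))| ≤ D * (l * r) := by
          rw [← Real.norm_eq_abs]
          calc ‖p (z - (x - (r / 2) • v))‖ ≤ ‖p‖ * ‖z - (x - (r / 2) • v)‖ := p.le_opNorm _
            _ ≤ D * (l * r) := mul_le_mul (hD p hpC) hzy (norm_nonneg _) hD0.le
        have h4 := (abs_le.mp h2).2
        linarith
      -- EReal lower bound for f q + q z
      have hA : ((ix + (-(D * (l * r)) - (r / 2) * (p v - ϖ)) : ℝ) : EReal) ≤
          f q + ((q z : ℝ) : EReal) := by
        rw [hsplit q, EReal.coe_add]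
        refine add_le_add ?_ (EReal.coe_le_coe_iff.mpr hqbound)
        rw [← hix]
        exact sInf_le (Set.mem_image_of_mem _ hqC)
      -- EReal upper bound for sInf at z
      have hB : sInf ((fun p => f p + ((p z : ℝ) : EReal)) '' C) <
          ((ix + r * ϖ / 8 + (D * (l * r) - (r / 2) * (p v)) : ℝ) : EReal) := by
        calc sInf ((fun p => f p + ((p z : ℝ) : EReal)) '' C)
            ≤ f p + ((p z : ℝ) : EReal) := sInf_le (Set.mem_image_of_mem _ hpC)
          _ = (f p + ((p x : ℝ) : EReal)) + ((p (z - x) : ℝ) : EReal) := hsplit p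
          _ < (sInf ((fun p => f p + ((p x : ℝ) : EReal)) '' C) + ((r * ϖ / 8 : ℝ) : EReal))
              + ((p (z - x) : ℝ) : EReal) := EReal.add_lt_add_right_coe hpmin _
          _ = ((ix + r * ϖ / 8 + p (z - x) : ℝ) : EReal) := by
              rw [hix, ← EReal.coe_add, ← EReal.coe_add]
          _ ≤ _ := EReal.coe_le_coe_iff.mpr (by linarith)
      have hC : f q + ((q z : ℝ) : EReal) <
          ((ix + r * ϖ / 8 + (D * (l * r) - (r / 2) * (p v)) + r * ϖ / 8 : ℝ) : EReal) := by
        calc f q + ((q z : ℝ) : EReal)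
            < sInf ((fun p => f p + ((p z : ℝ) : EReal)) '' C) + ((r * ϖ / 8 : ℝ) : EReal) :=
              hqlt
          _ < ((ix + r * ϖ / 8 + (D * (l * r) - (r / 2) * (p v)) : ℝ) : EReal) +
              ((r * ϖ / 8 : ℝ) : EReal) := EReal.add_lt_add_right_coe hB _
          _ = _ := by rw [← EReal.coe_add]
      have hfinal : ((ix + (-(D * (l * r)) - (r / 2) * (p v - ϖ)) : ℝ) : EReal) <
          ((ix + r * ϖ / 8 + (D * (l * r) - (r / 2) * (p v)) + r * ϖ / 8 : ℝ) : EReal) :=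
        lt_of_le_of_lt hA hC
      have hreal := EReal.coe_lt_coe_iff.mp hfinal
      -- contradiction: 2 D l r ≤ r ϖ / 8 so LHS ≥ RHS
      have hDl : D * l ≤ ϖ / 16 := by
        calc D * l ≤ D * (ϖ / (16 * D)) := by nlinarith
          _ = ϖ / 16 := by field_simp
      nlinarith [mul_le_mul_of_nonneg_right hDl hr0.le]
    refine ⟨r * ϖ / 8, by positivity, fun q hqC q' hq'C hq hq' => ?_⟩
    have h1 : γ q p < ε := key q hqC hq
    have h2 : γ q' p < ε := key q' hq'C hq'
    have h3 : γ q q' ≤ γ q p + γ p q' := hγtri q hqC q' hq'C p hpC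
    have h4 : γ p q' = γ q' p := hγsymm p hpC q' hq'C
    linarith

/-- the linear variational principle. For a norm-bounded `C ⊆ X*` which is a complete
pseudometric space with the w*-USP and any proper bounded-below `f : C → ℝ ∪ {+∞}`, there is a
σ-porous `F ⊆ X` such that for `x ∉ F`, the function `p ↦ f(p) + ⟨p,x⟩` attains
γ-strongly-directionally its infimum over `C` at some direction `u ∈ C`. -/
theorem linear_variational_principle
    {X : Type*} [NormedAddCommGroup X] [NormedSpace ℝ X] [CompleteSpace X]
    (C : Set (StrongDual ℝ X))
    (γ : StrongDual ℝ X → StrongDual ℝ X → ℝ)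
    (hbdd : ∃ D : ℝ, ∀ p ∈ C, ‖p‖ ≤ D)
    (hγ0 : ∀ p ∈ C, γ p p = 0)
    (hγsymm : ∀ p ∈ C, ∀ q ∈ C, γ p q = γ q p)
    (hγtri : ∀ p ∈ C, ∀ q ∈ C, ∀ r ∈ C, γ p q ≤ γ p r + γ r q)
    (hcomplete : ∀ u : ℕ → StrongDual ℝ X, (∀ n, u n ∈ C) →
      (∀ ε > (0 : ℝ), ∃ N : ℕ, ∀ m ≥ N, ∀ n ≥ N, γ (u m) (u n) < ε) →
      ∃ l ∈ C, Tendsto (fun n => γ (u n) l) atTop (nhds 0))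
    (hUSP : ∃ a > (0 : ℝ), ∀ ε ∈ Set.Ioc (0 : ℝ) a, ∃ ϖ > (0 : ℝ), ∀ p ∈ C,
      ∃ x : X, ‖x‖ ≤ 1 ∧ ∀ q ∈ C, ε ≤ γ q p → q x ≤ p x - ϖ)
    (f : StrongDual ℝ X → EReal)
    (hproper : ∃ p ∈ C, f p ≠ ⊤)
    (hbelow : ∃ m : ℝ, ∀ p ∈ C, (m : EReal) ≤ f p) :
    ∃ F : Set X, SigmaPorous F ∧ ∀ x ∉ F, ∃ u ∈ C,
      ∀ q : ℕ → StrongDual ℝ X, (∀ n, q n ∈ C) →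
        Tendsto (fun n => f (q n) + ((q n x : ℝ) : EReal)) atTop
          (nhds (sInf ((fun p => f p + ((p x : ℝ) : EReal)) '' C))) →
        Tendsto (fun n => γ (q n) u) atTop (nhds 0) := by
  obtain ⟨D₀, hD₀⟩ := hbdd
  obtain ⟨m, hm⟩ := hbelow
  obtain ⟨p₀, hp₀C, hp₀top⟩ := hproper
  obtain ⟨a, ha, hU⟩ := hUSP
  set D : ℝ := max D₀ 1 with hDdef
  have hD1 : (1 : ℝ) ≤ D := le_max_right _ _
  have hD : ∀ p ∈ C, ‖p‖ ≤ D := fun p hp => (hD₀ p hp).trans (le_max_left _ _)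
  have hfin : ∀ x : X, ∃ ix : ℝ,
      sInf ((fun p => f p + ((p x : ℝ) : EReal)) '' C) = (ix : EReal) :=
    fun x => lvp_finite C f D m hD (by linarith) hm p₀ hp₀C hp₀top x
  -- scales
  have hεmem : ∀ n : ℕ, a / ((n : ℝ) + 1) ∈ Set.Ioc (0 : ℝ) a := by
    intro n
    constructor
    · positivity
    · apply div_le_self ha.le
      have := Nat.cast_nonneg (α := ℝ) n
      linarith
  refine ⟨⋃ n : ℕ, lvpBad C γ f (a / ((n : ℝ) + 1)), ?_, ?_⟩
  · refine ⟨fun n => lvpBad C γ f (a / ((n : ℝ) + 1)), fun n => ?_, rfl⟩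
    obtain ⟨ϖ, hϖ, husp⟩ := hU _ (hεmem n)
    exact lvp_bad_porous C γ f D hD1 hD hγsymm hγtri hfin _ ϖ (hεmem n).1 hϖ husp
  · intro x hx
    have hgood : ∀ n : ℕ, ∃ δ : ℝ, 0 < δ ∧ ∀ p ∈ C, ∀ q ∈ C,
        f p + ((p x : ℝ) : EReal) < sInf ((fun p => f p + ((p x : ℝ) : EReal)) '' C) + (δ : EReal) →
        f q + ((q x : ℝ) : EReal) < sInf ((fun p => f p + ((p x : ℝ) : EReal)) '' C) + (δ : EReal) →
        γ p q ≤ 2 * (a / ((n : ℝ) + 1)) := by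
      intro n
      have hxn : x ∉ lvpBad C γ f (a / ((n : ℝ) + 1)) := by
        intro hmem
        exact hx (Set.mem_iUnion.mpr ⟨n, hmem⟩)
      simpa [lvpBad, not_not] using hxn
    choose δg hδg hgoodp using hgood
    -- a minimizing sequence
    have hex : ∀ n : ℕ, ∃ p ∈ C, f p + ((p x : ℝ) : EReal) <
        sInf ((fun p => f p + ((p x : ℝ) : EReal)) '' C) + ((1 / ((n : ℝ) + 1) : ℝ) : EReal) :=
      fun n => lvp_exists_min C f x (hfin x) _ (by positivity)
    choose p hpC hpmin using hex
    -- eventually every p n is a δ-minimizer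
    have hplt : ∀ δ : ℝ, 0 < δ → ∃ N : ℕ, ∀ n ≥ N, f (p n) + ((p n x : ℝ) : EReal) <
        sInf ((fun p => f p + ((p x : ℝ) : EReal)) '' C) + (δ : EReal) := by
      intro δ hδ
      obtain ⟨N, hN⟩ := exists_nat_one_div_lt hδ
      refine ⟨N, fun n hn => ?_⟩
      have h1 : (1 : ℝ) / ((n : ℝ) + 1) ≤ 1 / ((N : ℝ) + 1) := by
        apply one_div_le_one_div_of_le (by positivity)
        have : (N : ℝ) ≤ (n : ℝ) := Nat.cast_le.mpr hn
        linarith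
      have h2 : (1 : ℝ) / ((n : ℝ) + 1) ≤ δ := le_of_lt (lt_of_le_of_lt h1 hN)
      exact lt_of_lt_of_le (hpmin n) (add_le_add le_rfl (EReal.coe_le_coe_iff.mpr h2))
    -- Cauchy
    have hcauchy : ∀ e > (0 : ℝ), ∃ N : ℕ, ∀ j ≥ N, ∀ k ≥ N, γ (p j) (p k) < e := by
      intro e he
      obtain ⟨n₀, hn₀⟩ := exists_nat_one_div_lt (show (0 : ℝ) < e / (2 * a) by positivity)
      have hsmall : 2 * (a / ((n₀ : ℝ) + 1)) < e := by
        have h2 : (0 : ℝ) < 2 * a := by positivity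
        have h3 := mul_lt_mul_of_pos_left hn₀ h2
        have h4 : 2 * a * (e / (2 * a)) = e := by field_simp
        have h5 : 2 * a * (1 / ((n₀ : ℝ) + 1)) = 2 * (a / ((n₀ : ℝ) + 1)) := by ring
        linarith
      obtain ⟨N, hN⟩ := hplt (δg n₀) (hδg n₀)
      refine ⟨N, fun j hj k hk => ?_⟩
      have := hgoodp n₀ (p j) (hpC j) (p k) (hpC k) (hN j hj) (hN k hk)
      linarith
    obtain ⟨u, huC, hu⟩ := hcomplete p hpC hcauchy
    refine ⟨u, huC, fun q hqC hqtend => ?_⟩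
    have hγnn : ∀ g ∈ C, (0 : ℝ) ≤ γ g u := by
      intro g hg
      have h1 := hγtri g hg g hg u huC
      have h2 := hγsymm u huC g hg
      have h3 := hγ0 g hg
      linarith
    rw [Metric.tendsto_atTop]
    intro e he
    -- pick scale n₀ with 2 * ε_{n₀} < e / 2
    obtain ⟨n₀, hn₀⟩ := exists_nat_one_div_lt (show (0 : ℝ) < e / (4 * a) by positivity)
    have hsmall : 2 * (a / ((n₀ : ℝ) + 1)) < e / 2 := by
      have h2 : (0 : ℝ) < 2 * a := by positivity
      have h3 := mul_lt_mul_of_pos_left hn₀ h2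
      have h4 : 2 * a * (e / (4 * a)) = e / 2 := by field_simp; ring
      have h5 : 2 * a * (1 / ((n₀ : ℝ) + 1)) = 2 * (a / ((n₀ : ℝ) + 1)) := by ring
      linarith
    set δ₀ := δg n₀ with hδ₀def
    -- q n is eventually a δ₀-minimizer
    have hIlt : sInf ((fun p => f p + ((p x : ℝ) : EReal)) '' C) <
        sInf ((fun p => f p + ((p x : ℝ) : EReal)) '' C) + ((δ₀ : ℝ) : EReal) := by
      obtain ⟨ix, hix⟩ := hfin x
      rw [hix, ← EReal.coe_add]
      exact_mod_cast lt_add_of_pos_right ix (hδg n₀)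
    have hmem : Set.Iio (sInf ((fun p => f p + ((p x : ℝ) : EReal)) '' C) + ((δ₀ : ℝ) : EReal)) ∈
        nhds (sInf ((fun p => f p + ((p x : ℝ) : EReal)) '' C)) :=
      IsOpen.mem_nhds isOpen_Iio hIlt
    have hev := hqtend hmem
    rw [mem_map, mem_atTop_sets] at hev
    obtain ⟨N₁, hN₁⟩ := hev
    -- p j eventually a δ₀-minimizer and close to u
    obtain ⟨N₂, hN₂⟩ := hplt δ₀ (hδg n₀)
    have hu' := Metric.tendsto_atTop.mp hu (e / 2) (by positivity)
    obtain ⟨N₃, hN₃⟩ := hu'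
    set j := max N₂ N₃ with hjdef
    have hj2 : N₂ ≤ j := le_max_left _ _
    have hj3 : N₃ ≤ j := le_max_right _ _
    have hpju : γ (p j) u < e / 2 := by
      have := hN₃ j hj3
      rw [Real.dist_eq] at this
      have hnn := hγnn (p j) (hpC j)
      rw [abs_of_nonneg (by linarith)] at this
      linarith
    refine ⟨N₁, fun n hn => ?_⟩
    have hqn : f (q n) + ((q n x : ℝ) : EReal) <
        sInf ((fun p => f p + ((p x : ℝ) : EReal)) '' C) + ((δ₀ : ℝ) : EReal) := hN₁ n hn
    have hclose : γ (q n) (p j) ≤ 2 * (a / ((n₀ : ℝ) + 1)) :=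
      hgoodp n₀ (q n) (hqC n) (p j) (hpC j) hqn (hN₂ j hj2)
    have htri : γ (q n) u ≤ γ (q n) (p j) + γ (p j) u :=
      hγtri (q n) (hqC n) u huC (p j) (hpC j)
    rw [Real.dist_eq]
    have hnn := hγnn (q n) (hqC n)
    rw [abs_of_nonneg (by linarith)]
    linarith
end

section
/- Let X be a Banach space and C a norm-bounded subset of X*. Suppose (C, d) is a complete metric space, the identity map (C, d) → (C, weak*) is continuous, and (C, d) has the w*-uniform separation property in X*. Let f : (C,d) → ℝ ∪ {+∞} be proper, bounded below and lower semicontinuous. Then there exists a σ-porous subset F of X such that for every x ∈ X \ F, the function p ↦ f(p) + ⟨p, x⟩ has a strong minimum on (C, d). -/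
open Metric Set Filter

/-- if `(C,d)` is a complete metric space, norm-bounded in `X*`, the identity
`(C,d) → (C,weak*)` is continuous, `(C,d)` has the w*-USP, and `f` is proper, bounded below and
lower semicontinuous on `(C,d)`, then off a σ-porous set `F ⊆ X`, `p ↦ f(p) + ⟨p,x⟩` has a strong
minimum on `(C,d)`. -/
theorem strong_minimum_off_sigma_porous
    {X : Type*} [NormedAddCommGroup X] [NormedSpace ℝ X] [CompleteSpace X]
    (C : Set (StrongDual ℝ X))
    (d : StrongDual ℝ X → StrongDual ℝ X → ℝ)
    (hbdd : ∃ D : ℝ, ∀ p ∈ C, ‖p‖ ≤ D)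
    (hd0 : ∀ p ∈ C, d p p = 0)
    (hdsep : ∀ p ∈ C, ∀ q ∈ C, d p q = 0 → p = q)
    (hdsymm : ∀ p ∈ C, ∀ q ∈ C, d p q = d q p)
    (hdtri : ∀ p ∈ C, ∀ q ∈ C, ∀ r ∈ C, d p q ≤ d p r + d r q)
    (hcomplete : ∀ u : ℕ → StrongDual ℝ X, (∀ n, u n ∈ C) →
      (∀ ε > (0 : ℝ), ∃ N : ℕ, ∀ m ≥ N, ∀ n ≥ N, d (u m) (u n) < ε) →
      ∃ l ∈ C, Tendsto (fun n => d (u n) l) atTop (nhds 0))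
    (hwcont : ∀ p ∈ C, ∀ x : X, ∀ ε > (0 : ℝ), ∃ η > (0 : ℝ), ∀ q ∈ C,
      d q p < η → |q x - p x| < ε)
    (hUSP : ∃ a > (0 : ℝ), ∀ ε ∈ Set.Ioc (0 : ℝ) a, ∃ ϖ > (0 : ℝ), ∀ p ∈ C,
      ∃ x : X, ‖x‖ ≤ 1 ∧ ∀ q ∈ C, ε ≤ d q p → q x ≤ p x - ϖ)
    (f : StrongDual ℝ X → EReal)
    (hproper : ∃ p ∈ C, f p ≠ ⊤)
    (hbelow : ∃ m : ℝ, ∀ p ∈ C, (m : EReal) ≤ f p)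
    (hlsc : ∀ p ∈ C, ∀ q : ℕ → StrongDual ℝ X, (∀ n, q n ∈ C) →
      Tendsto (fun n => d (q n) p) atTop (nhds 0) →
      f p ≤ Filter.liminf (fun n => f (q n)) atTop) :
    ∃ F : Set X, SigmaPorous F ∧ ∀ x ∉ F, ∃ u ∈ C,
      (f u + ((u x : ℝ) : EReal) = sInf ((fun p => f p + ((p x : ℝ) : EReal)) '' C)) ∧
      ∀ q : ℕ → StrongDual ℝ X, (∀ n, q n ∈ C) →
        Tendsto (fun n => f (q n) + ((q n x : ℝ) : EReal)) atTop
          (nhds (sInf ((fun p => f p + ((p x : ℝ) : EReal)) '' C))) →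
        Tendsto (fun n => d (q n) u) atTop (nhds 0) := by
  classical
  obtain ⟨D₀, hD₀⟩ := hbdd
  obtain ⟨p₀, hp₀C, hp₀T⟩ := hproper
  obtain ⟨m, hm⟩ := hbelow
  obtain ⟨a, hapos, hUSP'⟩ := hUSP
  set D : ℝ := max D₀ 0 with hDdef
  have hD : ∀ p ∈ C, ‖p‖ ≤ D := fun p hp => (hD₀ p hp).trans (le_max_left _ _)
  have hD0 : (0:ℝ) ≤ D := le_max_right _ _
  have hdnn : ∀ p ∈ C, ∀ q ∈ C, 0 ≤ d p q := by
    intro p hp q hq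
    have h1 := hdtri p hp p hp q hq
    rw [hd0 p hp] at h1
    have h2 := hdsymm p hp q hq
    linarith
  set ε : ℕ → ℝ := fun n => min a (1 / (n + 1)) with hεdef
  have hεpos : ∀ n, 0 < ε n := fun n => lt_min hapos (by positivity)
  have hεa : ∀ n : ℕ, ε n ∈ Set.Ioc (0:ℝ) a := fun n => ⟨hεpos n, min_le_left _ _⟩
  have hεsmall : ∀ e > (0:ℝ), ∃ n, 2 * ε n < e := by
    intro e he
    obtain ⟨n, hn⟩ := exists_nat_gt (2 / e)
    refine ⟨n, ?_⟩
    rw [div_lt_iff₀ he] at hn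
    have h1 : ε n ≤ 1 / ((n:ℝ) + 1) := min_le_right _ _
    have h2 : 2 * (1 / ((n:ℝ) + 1)) < e := by
      rw [mul_one_div, div_lt_iff₀ (by positivity)]
      nlinarith
    linarith
  choose ϖ hϖpos hsep using fun n => hUSP' (ε n) (hεa n)
  -- basic facts about f and the infimum
  have hfne : ∀ p ∈ C, f p ≠ ⊥ := by
    intro p hp h
    have := hm p hp
    rw [h] at this
    exact (EReal.coe_ne_bot m) (le_bot_iff.mp this)
  have hfrep : ∀ p ∈ C, f p ≠ ⊤ → ∃ c : ℝ, f p = (c : EReal) :=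
    fun p hp hT => ⟨_, (EReal.coe_toReal hT (hfne p hp)).symm⟩
  have hμle : ∀ (x : X), ∀ p ∈ C,
      sInf ((fun p => f p + ((p x : ℝ) : EReal)) '' C) ≤ f p + ((p x : ℝ) : EReal) :=
    fun x p hp => sInf_le ⟨p, hp, rfl⟩
  have hμreal : ∀ x : X, ∃ t : ℝ,
      sInf ((fun p => f p + ((p x : ℝ) : EReal)) '' C) = (t : EReal) := by
    intro x
    refine ⟨_, (EReal.coe_toReal ?_ ?_).symm⟩
    · have h1 := hμle x p₀ hp₀C
      obtain ⟨c, hc⟩ := hfrep p₀ hp₀C hp₀T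
      have h2 : f p₀ + ((p₀ x : ℝ) : EReal) < ⊤ := by
        rw [hc, ← EReal.coe_add]; exact EReal.coe_lt_top _
      exact (h1.trans_lt h2).ne
    · have hlb : ((m - D * ‖x‖ : ℝ) : EReal) ≤
          sInf ((fun p => f p + ((p x : ℝ) : EReal)) '' C) := by
        apply le_sInf
        rintro v ⟨p, hp, rfl⟩
        have habs : |p x| ≤ D * ‖x‖ := by
          calc |p x| = ‖p x‖ := (Real.norm_eq_abs _).symm
          _ ≤ ‖p‖ * ‖x‖ := p.le_opNorm x
          _ ≤ D * ‖x‖ := mul_le_mul_of_nonneg_right (hD p hp) (norm_nonneg x)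
        have h1 : ((-(D * ‖x‖) : ℝ) : EReal) ≤ ((p x : ℝ) : EReal) := by
          rw [EReal.coe_le_coe_iff]
          linarith [(abs_le.mp habs).1]
        calc ((m - D * ‖x‖ : ℝ) : EReal) = (m : EReal) + ((-(D * ‖x‖) : ℝ) : EReal) := by
              rw [sub_eq_add_neg, EReal.coe_add]
          _ ≤ f p + ((p x : ℝ) : EReal) := add_le_add (hm p hp) h1
      intro h
      rw [h] at hlb
      exact (EReal.coe_ne_bot _) (le_bot_iff.mp hlb)
  have hnear : ∀ (x : X) (δ : ℝ), 0 < δ → ∃ p ∈ C,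
      f p + ((p x : ℝ) : EReal) <
        sInf ((fun p => f p + ((p x : ℝ) : EReal)) '' C) + (δ : EReal) := by
    intro x δ hδ
    obtain ⟨t, ht⟩ := hμreal x
    have hlt : sInf ((fun p => f p + ((p x : ℝ) : EReal)) '' C) <
        sInf ((fun p => f p + ((p x : ℝ) : EReal)) '' C) + (δ : EReal) := by
      rw [ht, ← EReal.coe_add]
      exact_mod_cast (by linarith : t < t + δ)
    obtain ⟨v, ⟨p, hp, rfl⟩, hv⟩ := sInf_lt_iff.mp hlt
    exact ⟨p, hp, hv⟩
  -- the exceptional sets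
  set Fn : ℕ → Set X := fun n => {x | ∀ δ > (0:ℝ), ∃ p ∈ C, ∃ q ∈ C,
    f p + ((p x : ℝ) : EReal) ≤
      sInf ((fun p => f p + ((p x : ℝ) : EReal)) '' C) + (δ : EReal) ∧
    f q + ((q x : ℝ) : EReal) ≤
      sInf ((fun p => f p + ((p x : ℝ) : EReal)) '' C) + (δ : EReal) ∧
    2 * ε n < d p q} with hFndef
  have hpor : ∀ n, Porous (Fn n) := by
    intro n
    set l : ℝ := min (1/2) (ϖ n / (16 * (D + 1))) with hldef
    have hlpos : 0 < l := lt_min (by norm_num) (div_pos (hϖpos n) (by positivity))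
    refine ⟨l, ⟨hlpos, (min_le_left _ _).trans (by norm_num)⟩, 1, one_pos, ?_⟩
    rintro x r ⟨hr0, hr1⟩
    have hrϖ : 0 < r * ϖ n := mul_pos hr0 (hϖpos n)
    obtain ⟨p, hpC, hpmin⟩ := hnear x (r * ϖ n / 8) (by positivity)
    obtain ⟨z, hz1, hzsep⟩ := hsep n p hpC
    set y : X := x - (r/2) • z with hydef
    refine ⟨y, ?_⟩
    intro y' hy'
    have hy'y : ‖y' - y‖ < l * r := by rw [mem_ball, dist_eq_norm] at hy'; exact hy'
    have hlr2 : l * r ≤ r / 2 := by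
      have : l ≤ 1/2 := min_le_left _ _
      nlinarith
    constructor
    · rw [mem_ball, dist_eq_norm]
      have e1 : y' - x = (y' - y) + (-((r/2) • z)) := by rw [hydef]; abel
      have h2 : ‖(r/2) • z‖ ≤ r/2 := by
        rw [norm_smul, Real.norm_eq_abs, abs_of_pos (by linarith : (0:ℝ) < r/2)]
        nlinarith
      calc ‖y' - x‖ ≤ ‖y' - y‖ + ‖-((r/2) • z)‖ := by rw [e1]; exact norm_add_le _ _
        _ = ‖y' - y‖ + ‖(r/2) • z‖ := by rw [norm_neg]
        _ < l * r + r/2 := by linarith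
        _ ≤ r := by linarith
    · -- y' ∉ Fn n
      intro hmem
      rw [hFndef] at hmem
      simp only [Set.mem_setOf_eq] at hmem
      obtain ⟨p₁, hp₁, q₁, hq₁, hv₁, hv₂, hd12⟩ := hmem (r * ϖ n / 8) (by positivity)
      have hDl : 2 * D * (l * r) ≤ r * ϖ n / 8 := by
        have hl2 : l ≤ ϖ n / (16 * (D+1)) := min_le_right _ _
        have h3 : l * (16 * (D+1)) ≤ ϖ n := by
          rw [← le_div_iff₀ (by positivity)]; exact hl2
        nlinarith [hϖpos n, hr0, hD0, hlpos]
      have key : ∀ q ∈ C, f q + ((q y' : ℝ) : EReal) ≤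
          sInf ((fun p => f p + ((p y' : ℝ) : EReal)) '' C) + ((r * ϖ n / 8 : ℝ) : EReal) →
          d q p < ε n := by
        intro q hqC hqval
        by_contra hfar
        push_neg at hfar
        have hsepq : q z ≤ p z - ϖ n := hzsep q hqC hfar
        obtain ⟨t, ht⟩ := hμreal x
        obtain ⟨t', ht'⟩ := hμreal y'
        have hfpT : f p ≠ ⊤ := by
          intro h
          rw [h, EReal.top_add_coe, ht, ← EReal.coe_add] at hpmin
          exact (not_top_lt hpmin)
        obtain ⟨s, hs⟩ := hfrep p hpC hfpT
        have hfqT : f q ≠ ⊤ := by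
          intro h
          rw [h, EReal.top_add_coe, ht', ← EReal.coe_add] at hqval
          exact (EReal.coe_ne_top _) (top_le_iff.mp hqval)
        obtain ⟨c, hc⟩ := hfrep q hqC hfqT
        -- real translations
        have h1 : t ≤ c + q x := by
          have h := hμle x q hqC
          rw [ht, hc, ← EReal.coe_add] at h
          exact_mod_cast h
        have h2 : s + p x < t + r * ϖ n / 8 := by
          rw [hs, ht, ← EReal.coe_add, ← EReal.coe_add] at hpmin
          exact_mod_cast hpmin
        have h3 : t' ≤ s + p y' := by
          have h := hμle y' p hpC
          rw [ht', hs, ← EReal.coe_add] at h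
          exact_mod_cast h
        have hqval' : c + q y' ≤ t' + r * ϖ n / 8 := by
          rw [hc, ht', ← EReal.coe_add, ← EReal.coe_add] at hqval
          exact_mod_cast hqval
        -- functional identities
        have hgy : ∀ g : StrongDual ℝ X, g y - g x = -((r/2) * g z) := by
          intro g
          rw [hydef, map_sub, map_smul, smul_eq_mul]
          ring
        have hq_eq : q y' = q x + q (y' - y) - (r/2) * q z := by
          have e1 : q (y' - y) = q y' - q y := map_sub q y' y
          have e2 := hgy q
          linarith
        have hp_eq : p y' = p x + p (y' - y) - (r/2) * p z := by
          have e1 : p (y' - y) = p y' - p y := map_sub p y' y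
          have e2 := hgy p
          linarith
        have hbnd : ∀ g : StrongDual ℝ X, g ∈ C → |g (y' - y)| ≤ D * (l * r) := by
          intro g hg
          calc |g (y' - y)| = ‖g (y' - y)‖ := (Real.norm_eq_abs _).symm
            _ ≤ ‖g‖ * ‖y' - y‖ := g.le_opNorm _
            _ ≤ D * (l * r) := mul_le_mul (hD g hg) hy'y.le (norm_nonneg _) hD0
        have hbq := abs_le.mp (hbnd q hqC)
        have hbp := abs_le.mp (hbnd p hpC)
        have hmul : (r/2) * q z ≤ (r/2) * p z - (r/2) * ϖ n := by nlinarith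
        linarith
      have h1 := key p₁ hp₁ hv₁
      have h2 := key q₁ hq₁ hv₂
      have h3 := hdtri p₁ hp₁ q₁ hq₁ p hpC
      have h4 := hdsymm q₁ hq₁ p hpC
      linarith
  refine ⟨⋃ n, Fn n, ⟨Fn, hpor, rfl⟩, ?_⟩
  intro x hx
  obtain ⟨t, ht⟩ := hμreal x
  have hx' : ∀ n, ∃ δ > (0:ℝ), ∀ p ∈ C, ∀ q ∈ C,
      f p + ((p x : ℝ) : EReal) ≤
        sInf ((fun p => f p + ((p x : ℝ) : EReal)) '' C) + (δ : EReal) →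
      f q + ((q x : ℝ) : EReal) ≤
        sInf ((fun p => f p + ((p x : ℝ) : EReal)) '' C) + (δ : EReal) →
      d p q ≤ 2 * ε n := by
    intro n
    have hxn : x ∉ Fn n := fun h => hx (Set.mem_iUnion.mpr ⟨n, h⟩)
    rw [hFndef] at hxn
    simp only [Set.mem_setOf_eq] at hxn
    push_neg at hxn
    obtain ⟨δ, hδ, h⟩ := hxn
    exact ⟨δ, hδ, fun p hp q hq h1 h2 => h p hp q hq h1 h2⟩
  choose δ' hδ'pos hδ' using hx'
  -- minimizing sequence
  have hws : ∀ k : ℕ, ∃ p ∈ C, f p + ((p x : ℝ) : EReal) <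
      sInf ((fun p => f p + ((p x : ℝ) : EReal)) '' C) + ((1/(k+1) : ℝ) : EReal) :=
    fun k => hnear x _ (by positivity)
  choose w hwC hwval using hws
  have hwin : ∀ (δ : ℝ), 0 < δ → ∃ N : ℕ, ∀ k ≥ N, f (w k) + ((w k x : ℝ) : EReal) ≤
      sInf ((fun p => f p + ((p x : ℝ) : EReal)) '' C) + (δ : EReal) := by
    intro δ hδ
    obtain ⟨N, hN⟩ := exists_nat_gt (1/δ)
    refine ⟨N, fun k hk => ?_⟩
    have hkN : (N:ℝ) ≤ k := Nat.cast_le.mpr hk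
    have h1 : (1:ℝ)/(k+1) ≤ δ := by
      rw [div_le_iff₀ (by positivity)]
      rw [div_lt_iff₀ hδ] at hN
      nlinarith
    exact (hwval k).le.trans (add_le_add le_rfl (by exact_mod_cast h1))
  have hcau : ∀ e > (0:ℝ), ∃ N : ℕ, ∀ i ≥ N, ∀ j ≥ N, d (w i) (w j) < e := by
    intro e he
    obtain ⟨n, hn⟩ := hεsmall e he
    obtain ⟨N, hN⟩ := hwin (δ' n) (hδ'pos n)
    exact ⟨N, fun i hi j hj =>
      lt_of_le_of_lt (hδ' n (w i) (hwC i) (w j) (hwC j) (hN i hi) (hN j hj)) hn⟩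
  obtain ⟨u, huC, hconv⟩ := hcomplete w hwC hcau
  have hwx : Tendsto (fun k => w k x) atTop (nhds (u x)) := by
    rw [Metric.tendsto_atTop]
    intro e he
    obtain ⟨η, hη, hη'⟩ := hwcont u huC x e he
    obtain ⟨N, hN⟩ := (Metric.tendsto_atTop.mp hconv) η hη
    refine ⟨N, fun k hk => ?_⟩
    have hdk : d (w k) u < η := by
      have h := hN k hk
      rw [Real.dist_eq, sub_zero] at h
      exact (abs_lt.mp h).2
    have := hη' (w k) (hwC k) hdk
    rwa [Real.dist_eq]
  have humin : f u + ((u x : ℝ) : EReal) =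
      sInf ((fun p => f p + ((p x : ℝ) : EReal)) '' C) := by
    refine le_antisymm ?_ (hμle x u huC)
    have hlsc' := hlsc u huC w hwC hconv
    have hub : Filter.liminf (fun k => f (w k)) atTop ≤ ((t - u x : ℝ) : EReal) := by
      have hconv2 : Tendsto (fun k : ℕ => ((t + 1/(k+1) - w k x : ℝ) : EReal)) atTop
          (nhds ((t - u x : ℝ) : EReal)) := by
        rw [EReal.tendsto_coe]
        have h1 : Tendsto (fun k : ℕ => 1/((k:ℝ)+1)) atTop (nhds 0) :=
          tendsto_one_div_add_atTop_nhds_zero_nat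
        have h2 := ((tendsto_const_nhds (x := t) (f := atTop)).add h1).sub hwx
        simpa using h2
      calc Filter.liminf (fun k => f (w k)) atTop
          ≤ Filter.liminf (fun k : ℕ => ((t + 1/(k+1) - w k x : ℝ) : EReal)) atTop := by
            refine liminf_le_liminf (Filter.Eventually.of_forall fun k => ?_)
              (by isBoundedDefault) (by isBoundedDefault)
            have hv := (hwval k).le
            rw [ht, ← EReal.coe_add] at hv
            have hwT : f (w k) ≠ ⊤ := by
              intro h
              rw [h, EReal.top_add_coe] at hv
              exact (EReal.coe_ne_top _) (top_le_iff.mp hv)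
            obtain ⟨c, hc⟩ := hfrep (w k) (hwC k) hwT
            rw [hc, ← EReal.coe_add] at hv
            rw [hc, EReal.coe_le_coe_iff]
            have := EReal.coe_le_coe_iff.mp hv
            linarith
        _ = ((t - u x : ℝ) : EReal) := hconv2.liminf_eq
    have hfu : f u ≤ ((t - u x : ℝ) : EReal) := hlsc'.trans hub
    calc f u + ((u x : ℝ) : EReal) ≤ ((t - u x : ℝ) : EReal) + ((u x : ℝ) : EReal) :=
          add_le_add_left hfu _
      _ = (t : EReal) := by rw [← EReal.coe_add]; norm_num
      _ = sInf ((fun p => f p + ((p x : ℝ) : EReal)) '' C) := ht.symm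
  refine ⟨u, huC, humin, ?_⟩
  intro q hqC hqten
  rw [Metric.tendsto_atTop]
  intro e he
  obtain ⟨n, hn⟩ := hεsmall e he
  have hlt : sInf ((fun p => f p + ((p x : ℝ) : EReal)) '' C) <
      sInf ((fun p => f p + ((p x : ℝ) : EReal)) '' C) + ((δ' n : ℝ) : EReal) := by
    rw [ht, ← EReal.coe_add]
    exact_mod_cast (by linarith [hδ'pos n] : t < t + δ' n)
  have hev := hqten.eventually_lt_const hlt
  rw [Filter.eventually_atTop] at hev
  obtain ⟨N, hN⟩ := hev
  refine ⟨N, fun k hk => ?_⟩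
  have h1 := hδ' n (q k) (hqC k) u huC (hN k hk).le
    (le_of_eq_of_le humin hlt.le)
  rw [Real.dist_eq, sub_zero, abs_of_nonneg (hdnn _ (hqC k) _ huC)]
  linarith
end

section
/- Let (L, d) be a complete metric space and X a Banach space of bounded continuous real-valued functions on L with norm ‖·‖_X ≥ α‖·‖_∞ for some α > 0, satisfying hypothesis (H): for every ε > 0 there exists ϖ(ε) > 0 such that for every x ∈ L there is b ∈ B_X with b(x) - ϖ(ε) ≥ sup{b(y) : y ∈ L, d(y,x) ≥ ε}. Then for every proper, bounded-below, lower semicontinuous f : L → ℝ ∪ {+∞}, there exists a σ-porous subset F of X such that for every h ∈ X \ F, the function f + h has a strong minimum on L. -/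
open Metric Set Filter

private lemma ereal_exists_real {a : EReal} (h1 : a ≠ ⊥) (h2 : a ≠ ⊤) :
    ∃ c : ℝ, a = (c : EReal) := by
  induction a using EReal.rec with
  | bot => exact absurd rfl h1
  | coe x => exact ⟨x, rfl⟩
  | top => exact absurd rfl h2

set_option maxHeartbeats 1000000 in
/-- extension of the Deville–Revalski variational principle. `X` is a Banach space of
bounded continuous functions on a complete metric space `L` (realized by a linear map `j` into
`C_b(L)` with `‖·‖_X ≥ α ‖·‖_∞`) satisfying hypothesis (H). Then for every proper, bounded below,
lower semicontinuous `f : L → ℝ ∪ {+∞}`, off a σ-porous subset `F` of `X`, `f + h` has a strong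
minimum on `L`. -/
theorem deville_revalski_extension
    {L : Type*} [MetricSpace L] [CompleteSpace L]
    {X : Type*} [NormedAddCommGroup X] [NormedSpace ℝ X] [CompleteSpace X]
    (j : X →ₗ[ℝ] BoundedContinuousFunction L ℝ)
    (hinj : Function.Injective j)
    (α : ℝ) (hα : 0 < α) (hnorm : ∀ h : X, α * ‖j h‖ ≤ ‖h‖)
    (hH : ∀ ε > (0 : ℝ), ∃ ϖ > (0 : ℝ), ∀ x : L, ∃ b : X, ‖b‖ ≤ 1 ∧
      ∀ y : L, ε ≤ dist y x → j b y ≤ j b x - ϖ)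
    (f : L → EReal)
    (hproper : ∃ x : L, f x ≠ ⊤)
    (hbelow : ∃ m : ℝ, ∀ x : L, (m : EReal) ≤ f x)
    (hlsc : LowerSemicontinuous f) :
    ∃ F : Set X, SigmaPorous F ∧ ∀ h ∉ F, ∃ x₀ : L,
      (f x₀ + ((j h x₀ : ℝ) : EReal) = sInf (Set.range fun x => f x + ((j h x : ℝ) : EReal))) ∧
      ∀ xs : ℕ → L,
        Tendsto (fun n => f (xs n) + ((j h (xs n) : ℝ) : EReal)) atTop
          (nhds (sInf (Set.range fun x => f x + ((j h x : ℝ) : EReal)))) →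
        Tendsto (fun n => dist (xs n) x₀) atTop (nhds 0) := by
  classical
  obtain ⟨x₁, hx₁⟩ := hproper
  obtain ⟨m, hm⟩ := hbelow
  -- pointwise bound on j
  have hjb : ∀ (v : X) (x : L), |j v x| ≤ ‖v‖ / α := by
    intro v x
    have h1 : |j v x| ≤ ‖j v‖ := by
      simpa [Real.norm_eq_abs] using (j v).norm_coe_le_norm x
    calc |j v x| ≤ ‖j v‖ := h1
      _ ≤ ‖v‖ / α := by rw [le_div_iff₀ hα, mul_comm]; exact hnorm v
  set g : X → L → EReal := fun h x => f x + ((j h x : ℝ) : EReal) with hgdef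
  have hfne : ∀ x, f x ≠ ⊥ :=
    fun x => ne_of_gt (lt_of_lt_of_le (EReal.bot_lt_coe m) (hm x))
  have hμlb : ∀ (h : X) (x : L), ((m - ‖j h‖ : ℝ) : EReal) ≤ g h x := by
    intro h x
    have h1 : ((m : ℝ) : EReal) ≤ f x := hm x
    have h2 : ((-‖j h‖ : ℝ) : EReal) ≤ ((j h x : ℝ) : EReal) := by
      apply EReal.coe_le_coe_iff.2
      have h3 : |j h x| ≤ ‖j h‖ := by
        simpa [Real.norm_eq_abs] using (j h).norm_coe_le_norm x
      linarith [(abs_le.1 h3).1]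
    calc ((m - ‖j h‖ : ℝ) : EReal) = ((m : ℝ) : EReal) + ((-‖j h‖ : ℝ) : EReal) := by
          rw [← EReal.coe_add]; exact EReal.coe_eq_coe_iff.2 (by ring)
      _ ≤ f x + ((j h x : ℝ) : EReal) := add_le_add h1 h2
      _ = g h x := by simp only [hgdef]
  set μ : X → EReal := fun h => sInf (Set.range fun x => g h x) with hμdef
  have hμle : ∀ (h : X) (x : L), μ h ≤ g h x := by
    intro h x
    rw [hμdef]
    exact sInf_le ⟨x, rfl⟩
  have hμreal : ∀ h : X, ∃ c : ℝ, μ h = (c : EReal) := by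
    intro h
    have h1 : ((m - ‖j h‖ : ℝ) : EReal) ≤ μ h := by
      rw [hμdef]
      exact le_sInf (by rintro v ⟨x, rfl⟩; exact hμlb h x)
    have h2 : μ h < ⊤ := by
      refine lt_of_le_of_lt (hμle h x₁) ?_
      simp only [hgdef]
      exact EReal.add_lt_top hx₁ (EReal.coe_ne_top _)
    exact ereal_exists_real (fun hb => EReal.coe_ne_bot _ (le_bot_iff.1 (h1.trans_eq hb))) h2.ne
  -- existence of points with value close to the infimum
  have hexlt : ∀ (h : X) (δ : ℝ), 0 < δ → ∃ x : L, g h x < μ h + (δ : EReal) := by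
    intro h δ hδ
    obtain ⟨c, hc⟩ := hμreal h
    have hlt : μ h < μ h + (δ : EReal) := by
      rw [hc, ← EReal.coe_add]
      exact EReal.coe_lt_coe_iff.2 (by linarith)
    rw [hμdef] at hlt
    obtain ⟨v, hvmem, hvlt⟩ := sInf_lt_iff.1 (by
      calc sInf (Set.range fun x => g h x) = μ h := by rw [hμdef]
        _ < μ h + (δ : EReal) := hlt)
    obtain ⟨x, rfl⟩ := hvmem
    exact ⟨x, hvlt⟩
  -- lower semicontinuity of the perturbed function
  have hglsc : ∀ (h : X) (x₀ : L) (c : EReal), c < g h x₀ → ∀ᶠ x in nhds x₀, c < g h x := by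
    intro h x₀ c hc
    obtain ⟨d, hd1, hd2⟩ := exists_between hc
    obtain ⟨dr, rfl⟩ := ereal_exists_real (ne_of_gt (lt_of_le_of_lt bot_le hd1))
      (lt_of_lt_of_le hd2 le_top).ne
    obtain ⟨e, he1, he2⟩ := exists_between hd1
    obtain ⟨er, rfl⟩ := ereal_exists_real (ne_of_gt (lt_of_le_of_lt bot_le he1))
      (lt_of_lt_of_le he2 le_top).ne
    have hη : 0 < dr - er := by
      have := EReal.coe_lt_coe_iff.1 he2; linarith
    have hfd : ((dr - j h x₀ : ℝ) : EReal) < f x₀ := by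
      by_contra hcon
      push_neg at hcon
      have hle : g h x₀ ≤ ((dr : ℝ) : EReal) := by
        simp only [hgdef]
        calc f x₀ + ((j h x₀ : ℝ) : EReal)
            ≤ ((dr - j h x₀ : ℝ) : EReal) + ((j h x₀ : ℝ) : EReal) := add_le_add_left hcon _
          _ = ((dr : ℝ) : EReal) := by rw [← EReal.coe_add]; exact EReal.coe_eq_coe_iff.2 (by ring)
      exact absurd (lt_of_lt_of_le hd2 hle) (lt_irrefl _)
    have E1 := hlsc x₀ _ hfd
    have E2 : ∀ᶠ x in nhds x₀, dist (j h x) (j h x₀) < dr - er :=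
      (Metric.tendsto_nhds.mp ((j h).continuous.tendsto x₀)) (dr - er) hη
    filter_upwards [E1, E2] with x hx1 hx2
    rw [Real.dist_eq] at hx2
    have hx2' : er < (dr - j h x₀) + j h x := by
      have := abs_lt.1 hx2; linarith
    calc c < ((er : ℝ) : EReal) := he1
      _ < (((dr - j h x₀) + j h x : ℝ) : EReal) := EReal.coe_lt_coe_iff.2 hx2'
      _ = ((dr - j h x₀ : ℝ) : EReal) + ((j h x : ℝ) : EReal) := EReal.coe_add _ _
      _ ≤ f x + ((j h x : ℝ) : EReal) := add_le_add_left (le_of_lt hx1) _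
      _ = g h x := by simp only [hgdef]
  -- the moduli from hypothesis (H)
  have H' : ∀ n : ℕ, ∃ w > (0 : ℝ), ∀ x : L, ∃ b : X, ‖b‖ ≤ 1 ∧
      ∀ y : L, 1 / (4 * ((n : ℝ) + 1)) ≤ dist y x → j b y ≤ j b x - w :=
    fun n => hH _ (by positivity)
  choose w hw hwb using H'
  -- the σ-porous exceptional sets
  set Fs : ℕ → Set X := fun n => {h : X | ∀ δ > (0 : ℝ), ∃ x z : L,
      g h x ≤ μ h + (δ : EReal) ∧ g h z ≤ μ h + (δ : EReal) ∧
      1 / ((n : ℝ) + 1) < dist x z} with hFsdef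
  refine ⟨⋃ n, Fs n, ⟨Fs, fun n => ?_, rfl⟩, ?_⟩
  · -- Porosity of Fs n
    have hl0 : (0 : ℝ) < min (1 / 2) (α * w n / 16) :=
      lt_min (by norm_num) (div_pos (mul_pos hα (hw n)) (by norm_num))
    refine ⟨min (1 / 2) (α * w n / 16), ⟨hl0, le_trans (min_le_left _ _) (by norm_num)⟩,
      1, one_pos, fun h r hr => ?_⟩
    obtain ⟨hr0, hr1⟩ := hr
    set l := min (1 / 2 : ℝ) (α * w n / 16) with hldef
    obtain ⟨c, hc⟩ := hμreal h
    have hσ : (0 : ℝ) < r * w n / 8 := div_pos (mul_pos hr0 (hw n)) (by norm_num)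
    obtain ⟨xb, hxb⟩ := hexlt h (r * w n / 8) hσ
    have hfxbtop : f xb ≠ ⊤ := by
      intro hT
      have hgt : g h xb = ⊤ := by
        simp only [hgdef]; rw [hT]; exact EReal.top_add_coe _
      rw [hgt, hc, ← EReal.coe_add] at hxb
      exact absurd hxb not_top_lt
    obtain ⟨fr, hfr⟩ := ereal_exists_real (hfne xb) hfxbtop
    have hgxblt : fr + j h xb < c + r * w n / 8 := by
      have := hxb
      simp only [hgdef] at this
      rw [hfr, hc, ← EReal.coe_add, ← EReal.coe_add] at this
      exact EReal.coe_lt_coe_iff.1 this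
    obtain ⟨b, hb1, hb2⟩ := hwb n xb
    refine ⟨h - (r / 2) • b, fun h' hh' => ?_⟩
    rw [mem_ball, dist_eq_norm] at hh'
    have hyh : ‖(h - (r / 2) • b) - h‖ ≤ r / 2 := by
      have h1 : ‖(h - (r / 2) • b) - h‖ = (r / 2) * ‖b‖ := by
        rw [show (h - (r / 2) • b) - h = -((r / 2) • b) by abel, norm_neg, norm_smul,
          Real.norm_eq_abs, abs_of_nonneg (by linarith)]
      rw [h1]
      nlinarith [norm_nonneg b]
    have hl2 : l ≤ 1 / 2 := min_le_left _ _
    have hd1 : ‖h' - h‖ < r := by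
      calc ‖h' - h‖ ≤ ‖h' - (h - (r / 2) • b)‖ + ‖(h - (r / 2) • b) - h‖ := by
            have := dist_triangle h' (h - (r / 2) • b) h
            simpa [dist_eq_norm] using this
        _ < l * r + r / 2 := by linarith [hh', hyh]
        _ ≤ r := by nlinarith
    constructor
    · rw [mem_ball, dist_eq_norm]; exact hd1
    · -- h' is not in Fs n
      intro hmem
      rw [hFsdef] at hmem
      obtain ⟨x, z, hxS, hzS, hxz⟩ := hmem (r * w n / 8) hσ
      -- pointwise decomposition bound
      have hdec : ∀ v : L, |j h' v - (j h v - (r / 2) * j b v)| ≤ l * r / α := by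
        intro v
        have he : j h' v - (j h v - (r / 2) * j b v) = j (h' - (h - (r / 2) • b)) v := by
          simp [map_sub, map_smul]
        rw [he]
        have hy' : ‖h' - (h - (r / 2) • b)‖ ≤ l * r := hh'.le
        calc |j (h' - (h - (r / 2) • b)) v| ≤ ‖h' - (h - (r / 2) • b)‖ / α := hjb _ v
          _ ≤ l * r / α := by gcongr
      have hfar : ∀ u : L, g h' u ≤ μ h' + ((r * w n / 8 : ℝ) : EReal) →
          dist u xb < 1 / (4 * ((n : ℝ) + 1)) := by
        intro u huS
        by_contra hcon
        push_neg at hcon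
        have hb2u := hb2 u hcon
        set B : ℝ := c + (-(r / 2) * (j b xb - w n) - l * r / α) with hBdef
        have hq : -(r / 2) * (j b xb - w n) - l * r / α ≤ j h' u - j h u := by
          have h1 := (abs_le.1 (hdec u)).1
          nlinarith [mul_nonneg (by linarith : (0:ℝ) ≤ r / 2)
            (by linarith : (0:ℝ) ≤ j b xb - w n - j b u)]
        have hBle : ((B : ℝ) : EReal) ≤ g h' u := by
          have hsum : (j h u + (j h' u - j h u) : ℝ) = j h' u := by ring
          calc ((B : ℝ) : EReal)
              = ((c : ℝ) : EReal) + ((-(r / 2) * (j b xb - w n) - l * r / α : ℝ) : EReal) := by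
                rw [← EReal.coe_add]
            _ ≤ g h u + ((j h' u - j h u : ℝ) : EReal) :=
                add_le_add ((le_of_eq hc.symm).trans (hμle h u)) (EReal.coe_le_coe_iff.2 hq)
            _ = g h' u := by
                simp only [hgdef]
                rw [add_assoc, ← EReal.coe_add, hsum]
        have hμ'le : μ h' ≤ ((fr + j h' xb : ℝ) : EReal) := by
          have h0 : g h' xb = ((fr + j h' xb : ℝ) : EReal) := by
            simp only [hgdef]; rw [hfr, ← EReal.coe_add]
          exact (hμle h' xb).trans_eq h0
        have hjxb : j h' xb ≤ j h xb - (r / 2) * j b xb + l * r / α := by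
          have := (abs_le.1 (hdec xb)).2; linarith
        have harith : fr + j h' xb + r * w n / 8 < B := by
          have hlr : l * r / α ≤ r * w n / 16 := by
            rw [div_le_iff₀ hα]
            have hl3 : l ≤ α * w n / 16 := min_le_right _ _
            calc l * r ≤ (α * w n / 16) * r := mul_le_mul_of_nonneg_right hl3 hr0.le
              _ = r * w n / 16 * α := by ring
          have hrw : 0 < r * w n := mul_pos hr0 (hw n)
          rw [hBdef]
          linarith
        have : g h' u < g h' u := by
          calc g h' u ≤ μ h' + ((r * w n / 8 : ℝ) : EReal) := huS
            _ ≤ ((fr + j h' xb : ℝ) : EReal) + ((r * w n / 8 : ℝ) : EReal) :=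
                add_le_add_left hμ'le _
            _ = ((fr + j h' xb + r * w n / 8 : ℝ) : EReal) := by rw [← EReal.coe_add]
            _ < ((B : ℝ) : EReal) := EReal.coe_lt_coe_iff.2 harith
            _ ≤ g h' u := hBle
        exact absurd this (lt_irrefl _)
      have hx' := hfar x hxS
      have hz' := hfar z hzS
      have htri : dist x z ≤ dist x xb + dist z xb := dist_triangle_right x z xb
      have hA : 1 / (4 * ((n : ℝ) + 1)) = (1 / ((n : ℝ) + 1)) / 4 := by
        have hn0 : ((n : ℝ) + 1) ≠ 0 := by positivity
        field_simp
      have hApos : (0 : ℝ) < 1 / ((n : ℝ) + 1) := by positivity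
      rw [hA] at hx' hz'
      linarith
  · -- strong minimum off the exceptional set
    intro h hh
    have hnot : ∀ n : ℕ, ∃ δ > (0 : ℝ), ∀ x z : L, g h x ≤ μ h + (δ : EReal) →
        g h z ≤ μ h + (δ : EReal) → dist x z ≤ 1 / ((n : ℝ) + 1) := by
      intro n
      have hn : h ∉ Fs n := fun hcmem => hh (Set.mem_iUnion.2 ⟨n, hcmem⟩)
      rw [hFsdef] at hn
      simp only [Set.mem_setOf_eq] at hn
      push_neg at hn
      obtain ⟨δ, hδ0, hδ⟩ := hn
      exact ⟨δ, hδ0, fun x z hx hz => hδ x z hx hz⟩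
    choose δ hδpos hδ using hnot
    set θ : ℕ → ℝ := fun n => min (1 / ((n : ℝ) + 1))
      ((Finset.range (n + 1)).inf' (Finset.nonempty_range_iff.mpr (Nat.succ_ne_zero n)) δ)
      with hθdef
    have hθpos : ∀ n, 0 < θ n := by
      intro n
      rw [hθdef]
      exact lt_min (by positivity) ((Finset.lt_inf'_iff _).2 fun i _ => hδpos i)
    have hθle : ∀ {n k : ℕ}, n ≤ k → θ k ≤ δ n := by
      intro n k hnk
      rw [hθdef]
      exact le_trans (min_le_right _ _)
        (Finset.inf'_le _ (Finset.mem_range.2 (Nat.lt_succ_of_le hnk)))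
    have hθle2 : ∀ n, θ n ≤ 1 / ((n : ℝ) + 1) := fun n => min_le_left _ _
    choose xseq hxseq using fun n => hexlt h (θ n) (hθpos n)
    have hmemS : ∀ {n k : ℕ}, n ≤ k → g h (xseq k) ≤ μ h + ((δ n : ℝ) : EReal) :=
      fun {n k} hnk => le_trans (le_of_lt (hxseq k))
        (add_le_add_right (EReal.coe_le_coe_iff.2 (hθle hnk)) _)
    have hcauchy : CauchySeq xseq := by
      rw [Metric.cauchySeq_iff]
      intro ε hε
      obtain ⟨n, hn⟩ := exists_nat_one_div_lt hε
      exact ⟨n, fun a ha b hb => lt_of_le_of_lt (hδ n _ _ (hmemS ha) (hmemS hb)) hn⟩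
    obtain ⟨x₀, hx₀⟩ := cauchySeq_tendsto_of_complete hcauchy
    obtain ⟨c, hc⟩ := hμreal h
    have hkey : ∀ t : ℝ, 0 < t → ¬ (μ h + (t : EReal) < g h x₀) := by
      intro t ht hcon
      have hev := hglsc h x₀ _ hcon
      have hev2 := hx₀.eventually hev
      obtain ⟨n, hn⟩ := exists_nat_one_div_lt ht
      obtain ⟨k, hk2, hk1⟩ := (hev2.and (eventually_ge_atTop n)).exists
      have hθk : θ k ≤ 1 / ((n : ℝ) + 1) := by
        refine le_trans (hθle2 k) ?_
        apply one_div_le_one_div_of_le (by positivity)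
        have : (n : ℝ) ≤ (k : ℝ) := Nat.cast_le.2 hk1
        linarith
      have hle : g h (xseq k) ≤ μ h + ((1 / ((n : ℝ) + 1) : ℝ) : EReal) :=
        le_trans (le_of_lt (hxseq k)) (add_le_add_right (EReal.coe_le_coe_iff.2 hθk) _)
      rw [hc] at hk2 hle
      have htrans : ((c : ℝ) : EReal) + (t : EReal) < ((c : ℝ) : EReal) +
          ((1 / ((n : ℝ) + 1) : ℝ) : EReal) := lt_of_lt_of_le hk2 hle
      rw [← EReal.coe_add, ← EReal.coe_add] at htrans
      have := EReal.coe_lt_coe_iff.1 htrans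
      linarith
    have hμx₀ : g h x₀ = μ h := by
      refine le_antisymm ?_ (hμle h x₀)
      by_contra hcon
      push_neg at hcon
      obtain ⟨d, hd1, hd2⟩ := exists_between hcon
      obtain ⟨e, rfl⟩ := ereal_exists_real (ne_of_gt (lt_of_le_of_lt bot_le hd1))
        (lt_of_lt_of_le hd2 le_top).ne
      have hce : c < e := by
        rw [hc] at hd1; exact EReal.coe_lt_coe_iff.1 hd1
      refine hkey (e - c) (by linarith) ?_
      have heq : μ h + ((e - c : ℝ) : EReal) = ((e : ℝ) : EReal) := by
        rw [hc, ← EReal.coe_add]; exact EReal.coe_eq_coe_iff.2 (by ring)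
      rw [heq]; exact hd2
    refine ⟨x₀, ?_, ?_⟩
    · have := hμx₀
      simp only [hgdef, hμdef] at this
      exact this
    · intro xs hxs
      have hxs' : Tendsto (fun k => g h (xs k)) atTop (nhds (μ h)) := by
        simp only [hgdef, hμdef]
        exact hxs
      rw [Metric.tendsto_atTop]
      intro ε hε
      obtain ⟨n, hn⟩ := exists_nat_one_div_lt hε
      have hlt : μ h < μ h + ((δ n : ℝ) : EReal) := by
        rw [hc, ← EReal.coe_add]
        exact EReal.coe_lt_coe_iff.2 (by linarith [hδpos n])
      have hnb : ∀ᶠ k in atTop, g h (xs k) < μ h + ((δ n : ℝ) : EReal) :=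
        hxs'.eventually_lt_const hlt
      obtain ⟨N, hN⟩ := eventually_atTop.1 hnb
      refine ⟨N, fun k hk => ?_⟩
      have h1 : g h (xs k) ≤ μ h + ((δ n : ℝ) : EReal) := le_of_lt (hN k hk)
      have h2 : g h x₀ ≤ μ h + ((δ n : ℝ) : EReal) := by
        rw [hμx₀]; exact le_of_lt hlt
      have hdd := hδ n _ _ h1 h2
      rw [Real.dist_0_eq_abs, abs_of_nonneg dist_nonneg]
      exact lt_of_le_of_lt hdd hn
end

section
/- Let X be a Banach space and C a norm-bounded subset of X* such that (C, γ) is a complete pseudometric space having the w*-uniform separation property in X* with modulus ϖ_C. Let f : C → ℝ ∪ {+∞} be proper and bounded below. Then there exists a > 0 such that for every ε ∈ (0,a] and every p* ∈ C with f(p*) < inf_C f + ε ϖ_C(ε), there exist x ∈ X and u ∈ C with: (i) γ(p*, u) ≤ ε, (ii) ‖x‖ < 2ε, and (iii) the function p ↦ f(p) + ⟨p, x⟩ attains γ-strongly-directionally its infimum over C at direction u. -/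
open Metric Set Filter

structure VPS (X : Type*) [NormedAddCommGroup X] [NormedSpace ℝ X] where
  eps : ℝ
  pt : StrongDual ℝ X
  dir : X
  acc : X
  bud : ℝ

theorem vps_chain {α : Type*} {P : α → Prop} {R : α → α → Prop} (s0 : α) (h0 : P s0)
    (hstep : ∀ s, P s → ∃ t, P t ∧ R s t) :
    ∃ u : ℕ → α, u 0 = s0 ∧ (∀ n, P (u n)) ∧ ∀ n, R (u n) (u (n + 1)) := by
  choose! next hP hR using hstep
  have key : ∀ n, P (next^[n] s0) := by
    intro n
    induction n with
    | zero => simpa using h0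
    | succ k ih => rw [Function.iterate_succ_apply']; exact hP _ ih
  refine ⟨fun n => next^[n] s0, rfl, key, fun n => ?_⟩
  show R (next^[n] s0) (next^[n + 1] s0)
  rw [Function.iterate_succ_apply']
  exact hR _ (key n)

set_option maxHeartbeats 2000000 in
/-- localized linear variational principle. Under the w*-USP with modulus `ϖ` on the
norm-bounded complete pseudometric space `(C,γ) ⊆ X*`, every `p* ∈ C` with
`f(p*) < inf_C f + ε·ϖ(ε)` admits a small linear perturbation `x` (with `‖x‖ < 2ε`) such that
`f + x̂` attains γ-strongly-directionally its infimum at some direction `u` with `γ(p*,u) ≤ ε`. -/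
theorem localized_variational_principle
    {X : Type*} [NormedAddCommGroup X] [NormedSpace ℝ X] [CompleteSpace X]
    (C : Set (StrongDual ℝ X))
    (γ : StrongDual ℝ X → StrongDual ℝ X → ℝ)
    (hbdd : ∃ D : ℝ, ∀ p ∈ C, ‖p‖ ≤ D)
    (hγ0 : ∀ p ∈ C, γ p p = 0)
    (hγsymm : ∀ p ∈ C, ∀ q ∈ C, γ p q = γ q p)
    (hγtri : ∀ p ∈ C, ∀ q ∈ C, ∀ r ∈ C, γ p q ≤ γ p r + γ r q)
    (hcomplete : ∀ u : ℕ → StrongDual ℝ X, (∀ n, u n ∈ C) →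
      (∀ ε > (0 : ℝ), ∃ N : ℕ, ∀ m ≥ N, ∀ n ≥ N, γ (u m) (u n) < ε) →
      ∃ l ∈ C, Tendsto (fun n => γ (u n) l) atTop (nhds 0))
    (a : ℝ) (ha : 0 < a) (ϖ : ℝ → ℝ)
    (hUSP : ∀ ε ∈ Set.Ioc (0 : ℝ) a, 0 < ϖ ε ∧ ∀ p ∈ C,
      ∃ x : X, ‖x‖ ≤ 1 ∧ ∀ q ∈ C, ε ≤ γ q p → q x ≤ p x - ϖ ε)
    (f : StrongDual ℝ X → EReal)
    (hproper : ∃ p ∈ C, f p ≠ ⊤)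
    (hbelow : ∃ m : ℝ, ∀ p ∈ C, (m : EReal) ≤ f p) :
    ∃ a' : ℝ, 0 < a' ∧ a' ≤ a ∧ ∀ ε ∈ Set.Ioc (0 : ℝ) a', ∀ p' ∈ C,
      f p' < sInf (f '' C) + ((ε * ϖ ε : ℝ) : EReal) →
      ∃ x : X, ∃ u ∈ C,
        γ p' u ≤ ε ∧ ‖x‖ < 2 * ε ∧
        ∀ q : ℕ → StrongDual ℝ X, (∀ n, q n ∈ C) →
          Tendsto (fun n => f (q n) + ((q n x : ℝ) : EReal)) atTop
            (nhds (sInf ((fun p => f p + ((p x : ℝ) : EReal)) '' C))) →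
          Tendsto (fun n => γ (q n) u) atTop (nhds 0) := by
  classical
  obtain ⟨D₁, hD₁⟩ := hbdd
  set D := max D₁ 0 with hDdef
  have hD0 : (0:ℝ) ≤ D := le_max_right _ _
  have hD : ∀ p ∈ C, ‖p‖ ≤ D := fun p hp => (hD₁ p hp).trans (le_max_left _ _)
  obtain ⟨m, hm⟩ := hbelow
  obtain ⟨p₀, hp₀C, hp₀t⟩ := hproper
  -- pairing bound
  have hpair : ∀ q ∈ C, ∀ w : X, |q w| ≤ D * ‖w‖ := by
    intro q hq w
    calc |q w| = ‖q w‖ := (Real.norm_eq_abs _).symm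
    _ ≤ ‖q‖ * ‖w‖ := q.le_opNorm w
    _ ≤ D * ‖w‖ := mul_le_mul_of_nonneg_right (hD q hq) (norm_nonneg w)
  have hγnonneg : ∀ q ∈ C, ∀ r ∈ C, 0 ≤ γ q r := by
    intro q hq r hr
    have h1 := hγtri q hq q hq r hr
    have h2 := hγ0 q hq
    have h3 := hγsymm q hq r hr
    linarith
  set FF : StrongDual ℝ X → ℝ := fun p => (f p).toReal with hFFdef
  have hFeq : ∀ p ∈ C, f p ≠ ⊤ → f p = ((FF p : ℝ) : EReal) := by
    intro p hp ht
    have hb : f p ≠ ⊥ := by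
      intro hb
      have := hm p hp
      rw [hb, le_bot_iff] at this
      exact EReal.coe_ne_bot m this
    exact (EReal.coe_toReal ht hb).symm
  have hmF : ∀ p ∈ C, f p ≠ ⊤ → m ≤ FF p := by
    intro p hp ht
    have := hm p hp
    rw [hFeq p hp ht] at this
    exact_mod_cast this
  set S : X → Set ℝ := fun w => (fun p => FF p + p w) '' {p | p ∈ C ∧ f p ≠ ⊤} with hSdef
  have hSne : ∀ w, (S w).Nonempty := fun w => ⟨_, ⟨p₀, ⟨hp₀C, hp₀t⟩, rfl⟩⟩
  have hSbdd : ∀ w, BddBelow (S w) := by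
    intro w
    refine ⟨m - D * ‖w‖, ?_⟩
    rintro r ⟨p, ⟨hpC, hpt⟩, rfl⟩
    show m - D * ‖w‖ ≤ FF p + p w
    have h1 := hmF p hpC hpt
    have h2 := hpair p hpC w
    have h3 := neg_abs_le (p w)
    linarith
  set I : X → ℝ := fun w => sInf (S w) with hIdef
  have hIle : ∀ w : X, ∀ p ∈ C, f p ≠ ⊤ → I w ≤ FF p + p w := by
    intro w p hp ht
    exact csInf_le (hSbdd w) ⟨p, ⟨hp, ht⟩, rfl⟩
  have hIlt : ∀ w : X, ∀ δ : ℝ, 0 < δ → ∃ p, p ∈ C ∧ f p ≠ ⊤ ∧ FF p + p w < I w + δ := by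
    intro w δ hδ
    obtain ⟨r, hrS, hrlt⟩ := exists_lt_of_csInf_lt (hSne w) (lt_add_of_pos_right (I w) hδ)
    obtain ⟨p, ⟨hpC, hpt⟩, rfl⟩ := hrS
    exact ⟨p, hpC, hpt, hrlt⟩
  have hkey : ∀ w : X,
      sInf ((fun p => f p + ((p w : ℝ) : EReal)) '' C) = ((I w : ℝ) : EReal) := by
    intro w
    apply le_antisymm
    · by_contra hcon
      push_neg at hcon
      obtain ⟨r, hr1, hr2⟩ := EReal.exists_between_coe_real hcon
      have hr1' : I w < r := by exact_mod_cast hr1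
      obtain ⟨p, hpC, hpt, hplt⟩ := hIlt w (r - I w) (by linarith)
      have hmem : f p + ((p w : ℝ) : EReal) ∈ (fun p => f p + ((p w : ℝ) : EReal)) '' C :=
        ⟨p, hpC, rfl⟩
      have h1 : sInf ((fun p => f p + ((p w : ℝ) : EReal)) '' C) ≤ f p + ((p w : ℝ) : EReal) :=
        sInf_le hmem
      have h2 : f p + ((p w : ℝ) : EReal) = ((FF p + p w : ℝ) : EReal) := by
        rw [hFeq p hpC hpt, ← EReal.coe_add]
      rw [h2] at h1
      have h3 : ((FF p + p w : ℝ) : EReal) < ((r : ℝ) : EReal) := by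
        exact_mod_cast (by linarith : FF p + p w < r)
      exact absurd ((h1.trans_lt h3).trans hr2) (lt_irrefl _)
    · apply le_sInf
      rintro b ⟨p, hpC, rfl⟩
      show ((I w : ℝ) : EReal) ≤ f p + ((p w : ℝ) : EReal)
      by_cases hpt : f p = ⊤
      · rw [hpt, EReal.top_add_coe]
        exact le_top
      · rw [hFeq p hpC hpt, ← EReal.coe_add]
        exact_mod_cast hIle w p hpC hpt
  refine ⟨a, ha, le_refl a, ?_⟩
  rintro ε ⟨hε0, hεa⟩ p' hp'C hlt
  have hf0 : sInf (f '' C) = ((I 0 : ℝ) : EReal) := by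
    have himg : (fun p => f p + ((p (0:X) : ℝ) : EReal)) '' C = f '' C := by
      apply image_congr
      intro p _
      simp
    rw [← himg]
    exact hkey 0
  have hp't : f p' ≠ ⊤ := by
    intro h
    rw [h, hf0, ← EReal.coe_add] at hlt
    exact absurd hlt (by simp)
  have hFp' : FF p' < I 0 + ε * ϖ ε := by
    rw [hf0, ← EReal.coe_add, hFeq p' hp'C hp't] at hlt
    exact_mod_cast hlt
  obtain ⟨hϖε, husp⟩ := hUSP ε ⟨hε0, hεa⟩
  obtain ⟨x₀, hx₀, hsep₀⟩ := husp p' hp'C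
  -- state predicate and transition relation
  set P : VPS X → Prop := fun s =>
    0 < s.eps ∧ s.eps ≤ a ∧ s.pt ∈ C ∧ f s.pt ≠ ⊤ ∧ ‖s.dir‖ ≤ 1 ∧ 0 < s.bud ∧
      (∀ q ∈ C, s.eps ≤ γ q s.pt → q s.dir ≤ s.pt s.dir - ϖ s.eps) ∧
      FF s.pt + s.pt s.acc + 2 * s.bud ≤ I s.acc + s.eps * ϖ s.eps with hPdef
  set R : VPS X → VPS X → Prop := fun s t =>
    t.acc = s.acc - s.eps • s.dir ∧ t.eps ≤ s.eps / 4 ∧ t.eps * (8 * D + 1) ≤ s.bud ∧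
      t.bud ≤ s.bud ∧ FF t.pt + t.pt t.acc < I t.acc + s.bud / 4 with hRdef
  have hs0 : P ⟨ε, p', x₀, 0, (I 0 + ε * ϖ ε - FF p') / 2⟩ := by
    refine ⟨hε0, hεa, hp'C, hp't, hx₀, by simpa using half_pos (by linarith : (0:ℝ) < I 0 + ε * ϖ ε - FF p'), hsep₀, ?_⟩
    show FF p' + p' (0:X) + 2 * ((I 0 + ε * ϖ ε - FF p') / 2) ≤ I (0:X) + ε * ϖ ε
    rw [map_zero]
    ring_nf
    linarith
  have hstep : ∀ s, P s → ∃ t, P t ∧ R s t := by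
    rintro s ⟨hse, hsa, hspC, hst, hsx, hsB, hssep, hsgap⟩
    have h8D : (0:ℝ) < 8 * D + 1 := by linarith
    set e' := min (s.eps / 4) (s.bud / (8 * D + 1)) with he'def
    have he'0 : 0 < e' := lt_min (by linarith) (div_pos hsB h8D)
    have he'a : e' ≤ a := le_trans (min_le_left _ _) (by linarith)
    obtain ⟨hϖ', husp'⟩ := hUSP e' ⟨he'0, he'a⟩
    set y' := s.acc - s.eps • s.dir with hy'def
    set β := min (e' * ϖ e' / 2) (s.bud / 4) with hβdef
    have hβ0 : 0 < β := lt_min (by positivity) (by linarith)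
    obtain ⟨p1, hp1C, hp1t, hp1lt⟩ := hIlt y' β hβ0
    obtain ⟨x1, hx1, hsep1⟩ := husp' p1 hp1C
    have hβ1 : β ≤ e' * ϖ e' / 2 := min_le_left _ _
    have hβ2 : β ≤ s.bud / 4 := min_le_right _ _
    refine ⟨⟨e', p1, x1, y', min s.bud ((e' * ϖ e' - β) / 2)⟩,
      ⟨he'0, he'a, hp1C, hp1t, hx1, ?_, hsep1, ?_⟩,
      rfl, min_le_left _ _, ?_, min_le_left _ _, ?_⟩
    · exact lt_min hsB (by nlinarith)
    · show FF p1 + p1 y' + 2 * min s.bud ((e' * ϖ e' - β) / 2) ≤ I y' + e' * ϖ e'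
      have h2 : min s.bud ((e' * ϖ e' - β) / 2) ≤ (e' * ϖ e' - β) / 2 := min_le_right _ _
      linarith
    · show e' * (8 * D + 1) ≤ s.bud
      have := min_le_right (s.eps / 4) (s.bud / (8 * D + 1))
      rw [← he'def] at this
      calc e' * (8 * D + 1) ≤ (s.bud / (8 * D + 1)) * (8 * D + 1) :=
        mul_le_mul_of_nonneg_right this (le_of_lt h8D)
      _ = s.bud := div_mul_cancel₀ _ (ne_of_gt h8D)
    · show FF p1 + p1 y' < I y' + s.bud / 4
      linarith
  obtain ⟨u, hu0, hPu, hRu⟩ := vps_chain _ hs0 hstep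
  -- basic sequence facts
  have hepos : ∀ n, 0 < (u n).eps := fun n => (hPu n).1
  have hBpos : ∀ n, 0 < (u n).bud := fun n => (hPu n).2.2.2.2.2.1
  have hCn : ∀ n, (u n).pt ∈ C := fun n => (hPu n).2.2.1
  have htn : ∀ n, f ((u n).pt) ≠ ⊤ := fun n => (hPu n).2.2.2.1
  have hquarter : ∀ n, (u (n + 1)).eps ≤ (u n).eps / 4 := fun n => (hRu n).2.1
  have hemono : ∀ n k, (u (n + k)).eps ≤ (u n).eps * (1 / 4) ^ k := by
    intro n k
    induction k with
    | zero => simp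
    | succ j ih =>
      have h1 := hquarter (n + j)
      have h2 : (u (n + (j + 1))).eps = (u (n + j + 1)).eps := by ring_nf
      rw [h2, pow_succ]
      nlinarith [hepos (n + j)]
  have hBanti : ∀ n k, (u (n + k)).bud ≤ (u n).bud := by
    intro n k
    induction k with
    | zero => simp
    | succ j ih =>
      have h1 := (hRu (n + j)).2.2.2.1
      have h2 : (u (n + (j + 1))).bud = (u (n + j + 1)).bud := by ring_nf
      rw [h2]
      exact h1.trans ih
  have hBanti' : ∀ n k, n ≤ k → (u k).bud ≤ (u n).bud := by
    intro n k hnk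
    obtain ⟨j, rfl⟩ := Nat.exists_eq_add_of_le hnk
    exact hBanti n j
  have hgeo : Summable (fun k : ℕ => ((1:ℝ) / 4) ^ k) :=
    summable_geometric_of_lt_one (by norm_num) (by norm_num)
  have hesum : Summable (fun n => (u n).eps) := by
    refine Summable.of_nonneg_of_le (fun n => (hepos n).le) (fun n => ?_) (hgeo.mul_left (u 0).eps)
    simpa using hemono 0 n
  have hσ0 : ∀ n, (0:ℝ) ≤ ∑' k, (u (k + n)).eps :=
    fun n => tsum_nonneg (fun k => (hepos _).le)
  have hshift : ∀ n, Summable (fun k => (u (k + n)).eps) :=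
    fun n => (summable_nat_add_iff n).2 hesum
  have hσle : ∀ n, (∑' k, (u (k + n)).eps) ≤ 2 * (u n).eps := by
    intro n
    have hb : ∀ k, (u (k + n)).eps ≤ (u n).eps * (1 / 4) ^ k := by
      intro k
      have := hemono n k
      rwa [Nat.add_comm n k] at this
    calc (∑' k, (u (k + n)).eps) ≤ ∑' k : ℕ, (u n).eps * (1 / 4) ^ k :=
      Summable.tsum_le_tsum hb (hshift n) (hgeo.mul_left _)
    _ = (u n).eps * (1 - 1 / 4)⁻¹ := by
      rw [tsum_mul_left, tsum_geometric_of_lt_one (by norm_num) (by norm_num)]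
    _ ≤ 2 * (u n).eps := by nlinarith [hepos n]
  -- the series of perturbation directions
  have hwnorm : ∀ k, ‖(u k).eps • (u k).dir‖ ≤ (u k).eps := by
    intro k
    rw [norm_smul, Real.norm_eq_abs, abs_of_pos (hepos k)]
    nlinarith [(hPu k).2.2.2.2.1, hepos k, norm_nonneg (u k).dir]
  have hwsum : Summable (fun k => (u k).eps • (u k).dir) :=
    Summable.of_norm_bounded hesum hwnorm
  have hwnsum : Summable (fun k => ‖(u k).eps • (u k).dir‖) :=
    Summable.of_nonneg_of_le (fun k => norm_nonneg _) hwnorm hesum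
  set z : X := -∑' k, (u k).eps • (u k).dir with hzdef
  have hyy : ∀ n, (u n).acc = -(∑ k ∈ Finset.range n, (u k).eps • (u k).dir) := by
    intro n
    induction n with
    | zero => rw [hu0]; simp
    | succ j ih =>
      rw [(hRu j).1, ih, Finset.sum_range_succ, neg_add]
      abel
  have hzy : ∀ n, ‖z - (u n).acc‖ ≤ ∑' k, (u (k + n)).eps := by
    intro n
    have hkey2 : (∑ i ∈ Finset.range n, (u i).eps • (u i).dir) +
        ∑' k, (u (k + n)).eps • (u (k + n)).dir = ∑' i, (u i).eps • (u i).dir :=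
      hwsum.sum_add_tsum_nat_add n
    have heq : z - (u n).acc = -∑' k, (u (k + n)).eps • (u (k + n)).dir := by
      rw [hzdef, hyy n, ← hkey2]
      abel
    rw [heq, norm_neg]
    calc ‖∑' k, (u (k + n)).eps • (u (k + n)).dir‖
        ≤ ∑' k, ‖(u (k + n)).eps • (u (k + n)).dir‖ :=
          norm_tsum_le_tsum_norm ((summable_nat_add_iff n).2 hwnsum)
    _ ≤ ∑' k, (u (k + n)).eps :=
          Summable.tsum_le_tsum (fun k => hwnorm _) ((summable_nat_add_iff n).2 hwnsum) (hshift n)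
  have hpairz : ∀ q ∈ C, ∀ n : ℕ, |q z - q ((u n).acc)| ≤ D * ∑' k, (u (k + n)).eps := by
    intro q hq n
    have h1 : q z - q ((u n).acc) = q (z - (u n).acc) := (map_sub q _ _).symm
    rw [h1]
    calc |q (z - (u n).acc)| ≤ D * ‖z - (u n).acc‖ := hpair q hq _
    _ ≤ D * ∑' k, (u (k + n)).eps := mul_le_mul_of_nonneg_left (hzy n) hD0
  have hσB : ∀ k, D * ∑' j, (u (j + (k + 1))).eps ≤ (u k).bud / 4 := by
    intro k
    have h1 := hσle (k + 1)
    have h2 := (hRu k).2.2.1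
    have h3 := hepos (k + 1)
    have h4 := hσ0 (k + 1)
    nlinarith [mul_le_mul_of_nonneg_left h1 hD0]
  -- Claim A: localization of near-minimizers of the limit perturbation
  have hclaimA : ∀ n, ∀ q ∈ C, f q ≠ ⊤ →
      FF q + q z < FF ((u n).pt) + (u n).pt z + 3 / 2 * (u n).bud →
      γ q ((u n).pt) < (u n).eps := by
    intro n q hqC hqt hlt'
    by_contra hcon
    push_neg at hcon
    have hsq : q ((u n).dir) ≤ (u n).pt ((u n).dir) - ϖ ((u n).eps) :=
      (hPu n).2.2.2.2.2.2.1 q hqC hcon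
    have hgapn := (hPu n).2.2.2.2.2.2.2
    have hy1 : (u (n + 1)).acc = (u n).acc - (u n).eps • (u n).dir := (hRu n).1
    have hI1 : I ((u n).acc) ≤ FF q + q ((u n).acc) := hIle _ q hqC hqt
    have hq1 : q ((u (n + 1)).acc) = q ((u n).acc) - (u n).eps * q ((u n).dir) := by
      rw [hy1, map_sub, map_smul, smul_eq_mul]
    have hp1 : (u n).pt ((u (n + 1)).acc) =
        (u n).pt ((u n).acc) - (u n).eps * (u n).pt ((u n).dir) := by
      rw [hy1, map_sub, map_smul, smul_eq_mul]
    have hmul := mul_le_mul_of_nonneg_left hsq (hepos n).le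
    have hstep1 : FF ((u n).pt) + (u n).pt ((u (n + 1)).acc) + 2 * (u n).bud
        ≤ FF q + q ((u (n + 1)).acc) := by
      rw [hq1, hp1]
      nlinarith
    have hz1 := abs_le.mp (hpairz q hqC (n + 1))
    have hz2 := abs_le.mp (hpairz ((u n).pt) (hCn n) (n + 1))
    have hσBn := hσB n
    linarith [hz1.1, hz1.2, hz2.1, hz2.2]
  -- chain estimate
  have hchain : ∀ n k, n ≤ k → γ ((u (k + 1)).pt) ((u n).pt) < (u n).eps := by
    intro n k hnk
    apply hclaimA n _ (hCn (k + 1)) (htn (k + 1))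
    have hnear := (hRu k).2.2.2.2
    have hI2 : I ((u (k + 1)).acc) ≤ FF ((u n).pt) + (u n).pt ((u (k + 1)).acc) :=
      hIle _ _ (hCn n) (htn n)
    have h1 := abs_le.mp (hpairz ((u (k + 1)).pt) (hCn (k + 1)) (k + 1))
    have h2 := abs_le.mp (hpairz ((u n).pt) (hCn n) (k + 1))
    have hσBk := hσB k
    have hBmon := hBanti' n k hnk
    have hBn0 := hBpos n
    linarith [h1.1, h1.2, h2.1, h2.2]
  -- convergence of eps to 0
  have hetend : Tendsto (fun n => (u n).eps) atTop (nhds 0) := by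
    apply squeeze_zero (fun n => (hepos n).le) (fun n => by simpa using hemono 0 n)
    have := (tendsto_pow_atTop_nhds_zero_of_lt_one (by norm_num : (0:ℝ) ≤ 1 / 4)
      (by norm_num : (1:ℝ) / 4 < 1)).const_mul (u 0).eps
    simpa using this
  -- Cauchy + completeness
  have hCauchy : ∀ ρ > (0:ℝ), ∃ N : ℕ, ∀ i ≥ N, ∀ j ≥ N, γ ((u i).pt) ((u j).pt) < ρ := by
    intro ρ hρ
    obtain ⟨N, hN⟩ := (Metric.tendsto_atTop.mp hetend) ρ hρ
    have hNe : ∀ n ≥ N, (u n).eps < ρ := by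
      intro n hn
      have := hN n hn
      rw [Real.dist_0_eq_abs, abs_of_pos (hepos n)] at this
      exact this
    refine ⟨N, ?_⟩
    intro i hi j hj
    rcases lt_trichotomy i j with h | h | h
    · obtain ⟨k, rfl⟩ : ∃ k, j = k + 1 := ⟨j - 1, by omega⟩
      rw [hγsymm _ (hCn i) _ (hCn (k + 1))]
      exact (hchain i k (by omega)).trans_le (le_of_lt (hNe i hi))
    · rw [h, hγ0 _ (hCn j)]; exact hρ
    · obtain ⟨k, rfl⟩ : ∃ k, i = k + 1 := ⟨i - 1, by omega⟩
      exact (hchain j k (by omega)).trans_le (le_of_lt (hNe j hj))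
  obtain ⟨ulim, hulimC, hultend⟩ := hcomplete (fun n => (u n).pt) hCn hCauchy
  have hu0eps : (u 0).eps = ε := by rw [hu0]
  have hu0pt : (u 0).pt = p' := by rw [hu0]
  refine ⟨z, ulim, hulimC, ?_, ?_, ?_⟩
  · -- γ p' ulim ≤ ε
    have hev : ∀ᶠ n in atTop, γ p' ulim ≤ (u 0).eps + γ ((u n).pt) ulim := by
      filter_upwards [eventually_ge_atTop 1] with n hn
      obtain ⟨k, rfl⟩ : ∃ k, n = k + 1 := ⟨n - 1, by omega⟩
      have htri := hγtri p' hp'C ulim hulimC ((u (k + 1)).pt) (hCn (k + 1))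
      have hsym := hγsymm p' hp'C ((u (k + 1)).pt) (hCn (k + 1))
      have hch := hchain 0 k (Nat.zero_le k)
      rw [hu0pt] at hch
      linarith
    have hlim : Tendsto (fun n => (u 0).eps + γ ((u n).pt) ulim) atTop (nhds ((u 0).eps + 0)) :=
      tendsto_const_nhds.add hultend
    have := ge_of_tendsto hlim hev
    rw [add_zero, hu0eps] at this
    exact this
  · -- ‖z‖ < 2 ε
    have hy0 : (u 0).acc = 0 := by rw [hu0]
    have h1 : ‖z‖ ≤ ∑' k, (u (k + 0)).eps := by
      have := hzy 0
      rwa [hy0, sub_zero] at this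
    have hsplit : (∑ i ∈ Finset.range 1, (u i).eps) + ∑' k, (u (k + 1)).eps
        = ∑' i, (u i).eps := hesum.sum_add_tsum_nat_add 1
    rw [Finset.sum_range_one] at hsplit
    have h2 : (∑' k, (u (k + 0)).eps) = ∑' i, (u i).eps := by simp
    have h3 := hσle 1
    have h4 := hquarter 0
    have h5 := hepos 1
    rw [h2, ← hsplit] at h1
    rw [← hu0eps]
    nlinarith [hepos 0]
  · -- strong directional attainment
    intro q hqC hqtend
    rw [hkey z] at hqtend
    rw [Metric.tendsto_atTop]
    intro ρ hρ
    have hev1 : ∀ᶠ n in atTop, (u n).eps < ρ / 2 :=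
      hetend.eventually (gt_mem_nhds (by linarith : (0:ℝ) < ρ / 2))
    have hev2 : ∀ᶠ n in atTop, γ ((u n).pt) ulim < ρ / 2 :=
      hultend.eventually (gt_mem_nhds (by linarith : (0:ℝ) < ρ / 2))
    obtain ⟨n, hn1, hn2⟩ := (hev1.and hev2).exists
    have hlt2 : ((I z : ℝ) : EReal)
        < ((FF ((u n).pt) + (u n).pt z + 3 / 2 * (u n).bud : ℝ) : EReal) := by
      have := hIle z ((u n).pt) (hCn n) (htn n)
      exact_mod_cast (by nlinarith [hBpos n] : I z < FF ((u n).pt) + (u n).pt z + 3 / 2 * (u n).bud)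
    obtain ⟨N, hN⟩ := eventually_atTop.mp (hqtend.eventually_lt_const hlt2)
    refine ⟨N, ?_⟩
    intro j hj
    have hevj := hN j hj
    have hfj : f (q j) ≠ ⊤ := by
      intro h
      rw [h, EReal.top_add_coe] at hevj
      exact not_top_lt hevj
    rw [hFeq _ (hqC j) hfj, ← EReal.coe_add] at hevj
    have hreal : FF (q j) + (q j) z < FF ((u n).pt) + (u n).pt z + 3 / 2 * (u n).bud := by
      exact_mod_cast hevj
    have hA := hclaimA n (q j) (hqC j) hfj hreal
    have htri := hγtri (q j) (hqC j) ulim hulimC ((u n).pt) (hCn n)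
    have hγnn := hγnonneg (q j) (hqC j) ulim hulimC
    rw [Real.dist_0_eq_abs, abs_of_nonneg hγnn]
    linarith
end

section
/- Let (K,d) be a complete metric space, Y a Banach space, and Z ⊆ C_b(K,Y) a Banach space with ‖·‖_Z ≥ ‖·‖_∞ satisfying condition (b) of Lemma: for every ε > 0 there exist ϖ_K(ε) > 0 and functions b_{x,ε} ∈ C_b(K,ℝ) with b_{x,ε}·e ∈ Z, ‖b_{x,ε}·e‖_Z ≤ 1 for all e ∈ S_Y, and b_{x,ε}(x) - ϖ_K(ε) ≥ sup{|b_{x,ε}(x')| : d(x',x) ≥ ε}. Then the set C_K = {y* ∘ δ_x : x ∈ K, y* ∈ S_{Y*}} ⊆ Z* with the pseudometric γ(y*∘δ_x, z*∘δ_{x'}) := d(x,x') has the w*-uniform separation property in Z* with modulus ϖ_K(ε)/2. -/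
open Metric Set Filter

/-- under condition (b) of Lemma property1, the set
`C_K = {y* ∘ δ_x : x ∈ K, y* ∈ S_{Y*}} ⊆ Z*` with the pseudometric
`γ(y*∘δ_x, z*∘δ_{x'}) = d(x,x')` has the w*-uniform separation property in `Z*` with modulus
`ϖ_K(ε)/2`, i.e. for every `ε > 0` and every `(x,y*) ∈ K × S_{Y*}` there is `T ∈ B_Z` with
`⟨z*∘δ_{x'}, T⟩ ≤ ⟨y*∘δ_x, T⟩ - ϖ_K(ε)/2` whenever `d(x',x) ≥ ε`. -/
theorem CK_has_wstar_USP
    {K : Type*} [MetricSpace K] [CompleteSpace K]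
    {Y : Type*} [NormedAddCommGroup Y] [NormedSpace ℝ Y] [CompleteSpace Y]
    {Z : Type*} [NormedAddCommGroup Z] [NormedSpace ℝ Z] [CompleteSpace Z]
    (j : Z →ₗ[ℝ] BoundedContinuousFunction K Y)
    (hinj : Function.Injective j)
    (hnorm : ∀ T : Z, ‖j T‖ ≤ ‖T‖)
    (ϖK : ℝ → ℝ)
    (hb : ∀ ε > (0 : ℝ), 0 < ϖK ε ∧ ∀ x : K,
      ∃ b : BoundedContinuousFunction K ℝ,
        (∀ e : Y, ‖e‖ = 1 → ∃ T : Z, ‖T‖ ≤ 1 ∧ ∀ x' : K, j T x' = b x' • e) ∧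
        ∀ x' : K, ε ≤ dist x' x → |b x'| ≤ b x - ϖK ε) :
    ∀ ε > (0 : ℝ), ∀ (x : K) (y : StrongDual ℝ Y), ‖y‖ = 1 →
      ∃ T : Z, ‖T‖ ≤ 1 ∧ ∀ (x' : K) (z : StrongDual ℝ Y), ‖z‖ = 1 →
        ε ≤ dist x' x → z (j T x') ≤ y (j T x) - ϖK ε / 2 := by
  intro ε hε x y hy
  obtain ⟨hϖ, hbx⟩ := hb ε hε
  obtain ⟨b, hbe, hbsep⟩ := hbx x
  by_cases hx0 : ∃ x' : K, ε ≤ dist x' x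
  · obtain ⟨x₀, hx₀⟩ := hx0
    have hbxpos : ϖK ε ≤ b x := by
      have := hbsep x₀ hx₀; have := abs_nonneg (b x₀); linarith
    -- pick v with ‖v‖ < 1 and |y v| > max (1 - ϖK ε/2) (1/2)
    have hlt : max (1 - ϖK ε / 2) (1/2) < ‖y‖ := by
      rw [hy]; apply max_lt <;> linarith
    obtain ⟨v, hv1, hv2⟩ := y.exists_lt_apply_of_lt_opNorm hlt
    have hhalf : (1:ℝ)/2 < ‖y v‖ := lt_of_le_of_lt (le_max_right _ _) hv2
    set w : Y := if 0 ≤ y v then v else -v with hw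
    have hyw : y w = |y v| := by
      rcases le_or_gt 0 (y v) with h | h
      · simp [hw, h, abs_of_nonneg h]
      · simp [hw, not_le.mpr h, abs_of_neg h]
    have hyw' : max (1 - ϖK ε / 2) (1/2) < y w := by
      rw [hyw]; exact hv2
    have hwn : ‖w‖ < 1 := by
      rcases le_or_gt 0 (y v) with h | h
      · simpa [hw, h] using hv1
      · simpa [hw, not_le.mpr h] using hv1
    have hwne : w ≠ 0 := by
      intro h
      rw [h, map_zero] at hyw'
      have := le_max_right (1 - ϖK ε / 2) (1/2 : ℝ)
      linarith
    have hwpos : 0 < ‖w‖ := norm_pos_iff.mpr hwne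
    have hywpos : 0 < y w := lt_of_le_of_lt (by positivity) hyw'
    obtain ⟨e, hen, hye'⟩ : ∃ e : Y, ‖e‖ = 1 ∧ 1 - ϖK ε / 2 < y e := by
      refine ⟨‖w‖⁻¹ • w, ?_, ?_⟩
      · rw [norm_smul, norm_inv, norm_norm, inv_mul_cancel₀ (ne_of_gt hwpos)]
      · rw [map_smul, smul_eq_mul]
        have h1 : (1:ℝ) ≤ ‖w‖⁻¹ := (one_le_inv_iff₀).mpr ⟨hwpos, le_of_lt hwn⟩
        have h2 : 1 - ϖK ε / 2 < y w := lt_of_le_of_lt (le_max_left _ _) hyw'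
        nlinarith
    obtain ⟨T, hT1, hT2⟩ := hbe e hen
    have hbx1 : b x ≤ 1 := by
      have h1 : ‖j T x‖ ≤ ‖j T‖ := (j T).norm_coe_le_norm x
      have h2 : ‖j T x‖ = |b x| := by rw [hT2 x, norm_smul, hen, mul_one, Real.norm_eq_abs]
      have := hnorm T
      calc b x ≤ |b x| := le_abs_self _
        _ ≤ 1 := by rw [← h2]; linarith
    refine ⟨T, hT1, fun x' z hz hd => ?_⟩
    rw [hT2 x', hT2 x, map_smul, map_smul, smul_eq_mul, smul_eq_mul]
    have hze : |z e| ≤ 1 := by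
      have := z.le_opNorm e
      rw [hz, hen, one_mul] at this
      simpa [Real.norm_eq_abs] using this
    have h3 : b x' * z e ≤ |b x'| := by
      calc b x' * z e ≤ |b x' * z e| := le_abs_self _
        _ = |b x'| * |z e| := abs_mul _ _
        _ ≤ |b x'| * 1 := by nlinarith [abs_nonneg (b x')]
        _ = |b x'| := mul_one _
    have h4 : |b x'| ≤ b x - ϖK ε := hbsep x' hd
    have hbxp : 0 < b x := lt_of_lt_of_le hϖ hbxpos
    nlinarith
  · push_neg at hx0
    refine ⟨0, by simp, fun x' z hz hd => absurd hd (not_le.mpr (hx0 x'))⟩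
end

section
/- Let X be a Banach space with property (α), witnessed by families {x_λ} ⊆ X and {x*_λ} ⊆ X* and constant ρ ∈ (0,1). Let K be the norm closure of {x_λ : λ ∈ Λ}. Then for every ε ∈ (0, some a] there exists ϖ(ε) > 0 such that for every x ∈ K there exists b ∈ {x*_λ} ⊆ S_{X*} with ⟨b, x⟩ - ϖ(ε) ≥ sup{|⟨b, x'⟩| : x' ∈ K, ‖x' - x‖ ≥ ε}. -/
open Metric Set Filter

/-- property (α) of Schachermayer yields the uniform separation estimate on
`K = closure {x_λ}`: for every small enough `ε > 0` there is `ϖ(ε) > 0` such that each `x ∈ K`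
admits a functional `x*_λ` with `|⟨x*_λ, x'⟩| ≤ ⟨x*_λ, x⟩ - ϖ(ε)` for all `x' ∈ K` with
`‖x' - x‖ ≥ ε`. -/
theorem property_alpha_separation
    {X : Type*} [NormedAddCommGroup X] [NormedSpace ℝ X] [CompleteSpace X]
    {Λ : Type*} (xl : Λ → X) (xs : Λ → StrongDual ℝ X)
    (ρ : ℝ) (hρ : 0 < ρ ∧ ρ < 1)
    (h1 : ∀ l : Λ, ‖xl l‖ = 1 ∧ ‖xs l‖ = 1 ∧ xs l (xl l) = 1)
    (h2 : ∀ l m : Λ, l ≠ m → |xs l (xl m)| ≤ ρ)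
    (h3 : Metric.closedBall (0 : X) 1 ⊆ closure (absConvexHull ℝ (Set.range xl))) :
    ∃ a > (0 : ℝ), ∀ ε ∈ Set.Ioc (0 : ℝ) a, ∃ ϖ > (0 : ℝ),
      ∀ x ∈ closure (Set.range xl), ∃ l : Λ,
        ∀ x' ∈ closure (Set.range xl), ε ≤ ‖x' - x‖ →
          |xs l x'| ≤ xs l x - ϖ := by
  obtain ⟨hρ0, hρ1⟩ := hρ
  -- pairwise separation of the points xl l
  have hsep : ∀ l m : Λ, l ≠ m → 1 - ρ ≤ dist (xl l) (xl m) := by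
    intro l m hlm
    have hb : xs l (xl l - xl m) ≤ ‖xl l - xl m‖ := by
      calc xs l (xl l - xl m) ≤ ‖xs l (xl l - xl m)‖ := Real.le_norm_self _
        _ ≤ ‖xs l‖ * ‖xl l - xl m‖ := (xs l).le_opNorm _
        _ = ‖xl l - xl m‖ := by rw [(h1 l).2.1, one_mul]
    have h2' := h2 l m hlm
    have : 1 - ρ ≤ xs l (xl l - xl m) := by
      have := (abs_le.mp h2').2
      simp only [map_sub, (h1 l).2.2]
      linarith
    rw [dist_eq_norm]
    linarith
  -- range xl is closed
  have hclosed : closure (Set.range xl) ⊆ Set.range xl := by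
    intro x hx
    by_contra hxn
    have hpos : 0 < (1 - ρ) / 2 := by linarith
    obtain ⟨y, ⟨l, rfl⟩, hy⟩ := Metric.mem_closure_iff.mp hx _ hpos
    have hxl : 0 < dist x (xl l) := by
      rw [dist_pos]
      intro h; exact hxn ⟨l, h.symm⟩
    obtain ⟨z, ⟨m, rfl⟩, hz⟩ :=
      Metric.mem_closure_iff.mp hx (min (dist x (xl l)) ((1 - ρ) / 2))
        (lt_min hxl hpos)
    have hml : m ≠ l := by
      rintro rfl
      exact absurd hz (by simp [lt_min_iff])
    have := hsep l m (Ne.symm hml)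
    have htri : dist (xl l) (xl m) ≤ dist x (xl l) + dist x (xl m) := by
      rw [dist_comm x (xl l)]; exact dist_triangle _ _ _
    have h1' : dist x (xl l) < (1 - ρ) / 2 := hy
    have h2'' : dist x (xl m) < (1 - ρ) / 2 := lt_of_lt_of_le hz (min_le_right _ _)
    linarith
  refine ⟨1, one_pos, fun ε hε => ⟨1 - ρ, by linarith, fun x hx => ?_⟩⟩
  obtain ⟨l, rfl⟩ := hclosed hx
  refine ⟨l, fun x' hx' hεx' => ?_⟩
  obtain ⟨m, rfl⟩ := hclosed hx'
  have hml : m ≠ l := by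
    rintro rfl
    simp only [sub_self, norm_zero] at hεx'
    linarith [hε.1]
  calc |xs l (xl m)| ≤ ρ := h2 l m (Ne.symm hml)
    _ = xs l (xl l) - (1 - ρ) := by rw [(h1 l).2.2]; ring
end
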